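/- arXiv:1408.6285 — 3 statements merged into one kernel-verified Lean document; each statement's English description precedes it below -/
import Mathlib

section
/- For jointly distributed finite random variables A and B, the Wyner tension satisfies T_Wyn(A;B) = CI_Wyn(A;B) - I(A;B), where T_Wyn(A;B) = inf over channels p_{Q|AB} with A-Q-B a Markov chain of I(A;Q|B)+I(B;Q|A), and CI_Wyn(A;B) = inf over such channels of I(A,B;Q). -/
namespace Paper

open Classical in
/-- Probability of an event under a pmf `μ` on a finite sample space. -/
noncomputable def pe {Ω : Type*} [Fintype Ω] (μ : Ω → ℝ) (E : Ω → Prop) : ℝ :=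
  ∑ ω, if E ω then μ ω else 0

/-- Probability that random variable `X` takes value `a`. -/
noncomputable def prob {Ω α : Type*} [Fintype Ω] (μ : Ω → ℝ) (X : Ω → α) (a : α) : ℝ :=
  pe μ (fun ω => X ω = a)

/-- `μ` is a probability mass function. -/
def IsPMF {Ω : Type*} [Fintype Ω] (μ : Ω → ℝ) : Prop :=
  (∀ ω, 0 ≤ μ ω) ∧ ∑ ω, μ ω = 1

open Classical in
/-- Shannon entropy (in bits) of the random variable `X` under `μ`. -/
noncomputable def H {Ω α : Type*} [Fintype Ω] (μ : Ω → ℝ) (X : Ω → α) : ℝ :=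
  -∑ a ∈ Finset.univ.image X, prob μ X a * Real.logb 2 (prob μ X a)

/-- Mutual information `I(X;Y)` in bits. -/
noncomputable def mutInfo {Ω α β : Type*} [Fintype Ω] (μ : Ω → ℝ)
    (X : Ω → α) (Y : Ω → β) : ℝ :=
  H μ X + H μ Y - H μ (fun ω => (X ω, Y ω))

/-- Conditional entropy `H(X|Y)` in bits. -/
noncomputable def condEnt {Ω α β : Type*} [Fintype Ω] (μ : Ω → ℝ)
    (X : Ω → α) (Y : Ω → β) : ℝ :=
  H μ (fun ω => (X ω, Y ω)) - H μ Y

/-- Conditional mutual information `I(X;Y|Z)` in bits. -/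
noncomputable def condMutInfo {Ω α β γ : Type*} [Fintype Ω] (μ : Ω → ℝ)
    (X : Ω → α) (Y : Ω → β) (Z : Ω → γ) : ℝ :=
  H μ (fun ω => (X ω, Z ω)) + H μ (fun ω => (Y ω, Z ω))
    - H μ (fun ω => (X ω, Y ω, Z ω)) - H μ Z

end Paper
namespace Paper

/-- Wyner tension `T_Wyn(A;B)`: infimum over channels `p_{Q|AB}` (on some finite
alphabet, wlog `Fin n`) making `A-Q-B` a Markov chain, of `I(A;Q|B)+I(B;Q|A)`. -/
noncomputable def TWyn {α β : Type} [Fintype α] [Fintype β] (μ : α × β → ℝ) : ℝ :=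
  sInf { v : ℝ | ∃ (n : ℕ) (ν : α × β × Fin n → ℝ), IsPMF ν ∧
    (∀ a b, (∑ q, ν (a, b, q)) = μ (a, b)) ∧
    condMutInfo ν (fun w => w.1) (fun w => w.2.1) (fun w => w.2.2) = 0 ∧
    v = condMutInfo ν (fun w => w.1) (fun w => w.2.2) (fun w => w.2.1)
      + condMutInfo ν (fun w => w.2.1) (fun w => w.2.2) (fun w => w.1) }

/-- Wyner's common information `CI_Wyn(A;B)`: infimum over channels `p_{Q|AB}`
with `A-Q-B` a Markov chain of `I(A,B;Q)`. -/
noncomputable def CIWyn {α β : Type} [Fintype α] [Fintype β] (μ : α × β → ℝ) : ℝ :=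
  sInf { v : ℝ | ∃ (n : ℕ) (ν : α × β × Fin n → ℝ), IsPMF ν ∧
    (∀ a b, (∑ q, ν (a, b, q)) = μ (a, b)) ∧
    condMutInfo ν (fun w => w.1) (fun w => w.2.1) (fun w => w.2.2) = 0 ∧
    v = mutInfo ν (fun w => (w.1, w.2.1)) (fun w => w.2.2) }

end Paper

namespace Paper
open Finset

variable {Ω : Type*} [Fintype Ω] {μ : Ω → ℝ}

lemma prob_nonneg {α : Type*} (hμ : ∀ ω, 0 ≤ μ ω) (X : Ω → α) (a : α) :
    0 ≤ prob μ X a := by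
  classical
  apply Finset.sum_nonneg
  intro ω _
  split <;> simp [hμ ω]

lemma H_univ {α : Type*} [Fintype α] (X : Ω → α) :
    H μ X = -∑ a : α, prob μ X a * Real.logb 2 (prob μ X a) := by
  classical
  unfold H
  congr 1
  apply Finset.sum_subset (Finset.subset_univ _)
  intro a _ ha
  have : prob μ X a = 0 := by
    unfold prob pe
    apply Finset.sum_eq_zero
    intro ω _
    rw [if_neg]
    intro h
    exact ha (Finset.mem_image.2 ⟨ω, Finset.mem_univ _, h⟩)
  simp [this]

lemma H_congr {Ω' : Type*} [Fintype Ω'] {μ' : Ω' → ℝ} {α : Type*} [Fintype α]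
    {X : Ω → α} {X' : Ω' → α} (h : ∀ a, prob μ X a = prob μ' X' a) :
    H μ X = H μ' X' := by
  rw [H_univ, H_univ]
  simp [h]

lemma prob_comp_inj {α β : Type*} {X : Ω → α} {f : α → β} (hf : Function.Injective f)
    (a : α) : prob μ (fun ω => f (X ω)) (f a) = prob μ X a := by
  classical
  unfold prob pe
  apply Finset.sum_congr rfl
  intro ω _
  simp [hf.eq_iff]

lemma H_comp_inj {α β : Type*} [Fintype α] [Fintype β] {X : Ω → α} {f : α → β}
    (hf : Function.Injective f) : H μ (fun ω => f (X ω)) = H μ X := by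
  classical
  rw [H_univ, H_univ]
  congr 1
  have h1 : ∑ b : β, prob μ (fun ω => f (X ω)) b * Real.logb 2 (prob μ (fun ω => f (X ω)) b)
      = ∑ b ∈ Finset.univ.image f, prob μ (fun ω => f (X ω)) b * Real.logb 2 (prob μ (fun ω => f (X ω)) b) := by
    symm
    apply Finset.sum_subset (Finset.subset_univ _)
    intro b _ hb
    have : prob μ (fun ω => f (X ω)) b = 0 := by
      unfold prob pe
      apply Finset.sum_eq_zero
      intro ω _
      rw [if_neg]
      intro h
      exact hb (Finset.mem_image.2 ⟨X ω, Finset.mem_univ _, h⟩)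
    simp [this]
  rw [h1, Finset.sum_image (fun x _ y _ h => hf h)]
  apply Finset.sum_congr rfl
  intro a _
  rw [prob_comp_inj hf]

lemma prob_congr_support {α : Type*} {X X' : Ω → α}
    (h : ∀ ω, μ ω ≠ 0 → X ω = X' ω) (a : α) : prob μ X a = prob μ X' a := by
  classical
  unfold prob pe
  apply Finset.sum_congr rfl
  intro ω _
  by_cases hω : μ ω = 0
  · simp [hω]
  · simp only [h ω hω]

end Paper
namespace Paper
open Finset Real

lemma pZ_sq_div (t : ℝ) : t * t / t = t := by
  by_cases h : t = 0
  · simp [h]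
  · rw [mul_div_assoc, div_self h, mul_one]

lemma sum_rotr {ι₁ ι₂ ι₃ : Type*} [Fintype ι₁] [Fintype ι₂] [Fintype ι₃]
    (f : ι₁ → ι₂ → ι₃ → ℝ) :
    ∑ a, ∑ b, ∑ c, f a b c = ∑ c, ∑ a, ∑ b, f a b c := by
  rw [show (∑ a, ∑ b, ∑ c, f a b c) = ∑ a, ∑ c, ∑ b, f a b c from
    Finset.sum_congr rfl fun a _ => Finset.sum_comm]
  exact Finset.sum_comm

lemma sum_rotl {ι₁ ι₂ ι₃ : Type*} [Fintype ι₁] [Fintype ι₂] [Fintype ι₃]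
    (f : ι₁ → ι₂ → ι₃ → ℝ) :
    ∑ a, ∑ b, ∑ c, f a b c = ∑ b, ∑ c, ∑ a, f a b c :=
  (sum_rotr (fun b c a => f a b c)).symm

lemma submod_ln {α β γ : Type*} [Fintype α] [Fintype β] [Fintype γ]
    (p : α → β → γ → ℝ) (hp : ∀ x y z, 0 ≤ p x y z) :
    ∑ x, ∑ z, (∑ y, p x y z) * Real.log (∑ y, p x y z)
      + ∑ y, ∑ z, (∑ x, p x y z) * Real.log (∑ x, p x y z)
    ≤ (∑ x, ∑ y, ∑ z, p x y z * Real.log (p x y z))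
      + ∑ z, (∑ x, ∑ y, p x y z) * Real.log (∑ x, ∑ y, p x y z) := by
  classical
  set pXZ : α → γ → ℝ := fun x z => ∑ y, p x y z with hpXZ
  set pYZ : β → γ → ℝ := fun y z => ∑ x, p x y z with hpYZ
  set pZ : γ → ℝ := fun z => ∑ x, ∑ y, p x y z with hpZ
  have hpXZ0 : ∀ x z, 0 ≤ pXZ x z := fun x z => Finset.sum_nonneg fun y _ => hp x y z
  have hpYZ0 : ∀ y z, 0 ≤ pYZ y z := fun y z => Finset.sum_nonneg fun x _ => hp x y z
  have hpZ0 : ∀ z, 0 ≤ pZ z := fun z => Finset.sum_nonneg fun x _ => hpXZ0 x z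
  have e1 : ∑ x, ∑ z, pXZ x z * Real.log (pXZ x z)
      = ∑ x, ∑ y, ∑ z, p x y z * Real.log (pXZ x z) := by
    refine Finset.sum_congr rfl fun x _ => ?_
    simp only [hpXZ, Finset.sum_mul]
    exact Finset.sum_comm
  have e2 : ∑ y, ∑ z, pYZ y z * Real.log (pYZ y z)
      = ∑ x, ∑ y, ∑ z, p x y z * Real.log (pYZ y z) := by
    have h0 : ∑ y, ∑ z, pYZ y z * Real.log (pYZ y z)
        = ∑ y, ∑ z, ∑ x, p x y z * Real.log (pYZ y z) := by
      refine Finset.sum_congr rfl fun y _ => Finset.sum_congr rfl fun z _ => ?_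
      simp only [hpYZ, Finset.sum_mul]
    rw [h0, sum_rotr (fun y z x => p x y z * Real.log (pYZ y z))]
  have e3 : ∑ z, pZ z * Real.log (pZ z)
      = ∑ x, ∑ y, ∑ z, p x y z * Real.log (pZ z) := by
    have h0 : ∑ z, pZ z * Real.log (pZ z) = ∑ z, ∑ x, ∑ y, p x y z * Real.log (pZ z) := by
      refine Finset.sum_congr rfl fun z _ => ?_
      simp only [hpZ, Finset.sum_mul]
    rw [h0, sum_rotl (fun z x y => p x y z * Real.log (pZ z))]
  rw [e1, e2, e3]
  have key : ∀ x y z, p x y z * Real.log (pXZ x z) + p x y z * Real.log (pYZ y z)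
      - p x y z * Real.log (p x y z) - p x y z * Real.log (pZ z)
      ≤ pXZ x z * pYZ y z / pZ z - p x y z := by
    intro x y z
    by_cases ht : p x y z = 0
    · rw [ht]
      have : 0 ≤ pXZ x z * pYZ y z / pZ z :=
        div_nonneg (mul_nonneg (hpXZ0 x z) (hpYZ0 y z)) (hpZ0 z)
      simpa using this
    · have htpos : 0 < p x y z := lt_of_le_of_ne (hp x y z) (Ne.symm ht)
      have hXZle : p x y z ≤ pXZ x z := Finset.single_le_sum (fun i _ => hp x i z) (Finset.mem_univ y)
      have hYZle : p x y z ≤ pYZ y z := Finset.single_le_sum (fun i _ => hp i y z) (Finset.mem_univ x)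
      have hZle : pXZ x z ≤ pZ z := Finset.single_le_sum (fun i _ => hpXZ0 i z) (Finset.mem_univ x)
      have hXZpos : 0 < pXZ x z := lt_of_lt_of_le htpos hXZle
      have hYZpos : 0 < pYZ y z := lt_of_lt_of_le htpos hYZle
      have hZpos : 0 < pZ z := lt_of_lt_of_le hXZpos hZle
      have hr : 0 < pXZ x z * pYZ y z / (p x y z * pZ z) := by positivity
      have hlog := Real.log_le_sub_one_of_pos hr
      have hlogeq : Real.log (pXZ x z * pYZ y z / (p x y z * pZ z))
          = Real.log (pXZ x z) + Real.log (pYZ y z) - Real.log (p x y z) - Real.log (pZ z) := by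
        rw [Real.log_div (by positivity) (by positivity),
          Real.log_mul (ne_of_gt hXZpos) (ne_of_gt hYZpos),
          Real.log_mul (ne_of_gt htpos) (ne_of_gt hZpos)]
        ring
      rw [hlogeq] at hlog
      have hmul := mul_le_mul_of_nonneg_left hlog (le_of_lt htpos)
      have heq : p x y z * (pXZ x z * pYZ y z / (p x y z * pZ z) - 1)
          = pXZ x z * pYZ y z / pZ z - p x y z := by
        field_simp
      rw [heq] at hmul
      linarith
  have hsum1 : ∑ x, ∑ y, ∑ z, (pXZ x z * pYZ y z / pZ z) = ∑ z, pZ z := by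
    rw [sum_rotr (fun x y z => pXZ x z * pYZ y z / pZ z)]
    have h1 : ∀ z, ∑ y, ∑ x, (pXZ x z * pYZ y z / pZ z) = pZ z := by
      intro z
      have : ∑ y, ∑ x, (pXZ x z * pYZ y z / pZ z)
          = (∑ x, pXZ x z) * (∑ y, pYZ y z) / pZ z := by
        rw [Finset.sum_mul, Finset.sum_div]
        rw [Finset.sum_comm]
        refine Finset.sum_congr rfl fun x _ => ?_
        rw [Finset.mul_sum, Finset.sum_div]
      rw [this]
      have hx : (∑ x, pXZ x z) = pZ z := rfl
      have hy : (∑ y, pYZ y z) = pZ z := by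
        simp only [hpYZ, hpZ]
        exact Finset.sum_comm
      rw [hx, hy, pZ_sq_div]
    have h2 : ∀ z, ∑ x, ∑ y, (pXZ x z * pYZ y z / pZ z) = pZ z := by
      intro z; rw [Finset.sum_comm]; exact h1 z
    exact Finset.sum_congr rfl fun z _ => h2 z
  have hsum2 : ∑ x, ∑ y, ∑ z, p x y z = ∑ z, pZ z := by
    rw [sum_rotr p]
  have hbig : ∑ x, ∑ y, ∑ z, (p x y z * Real.log (pXZ x z) + p x y z * Real.log (pYZ y z)
      - p x y z * Real.log (p x y z) - p x y z * Real.log (pZ z))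
      ≤ ∑ x, ∑ y, ∑ z, (pXZ x z * pYZ y z / pZ z - p x y z) := by
    refine Finset.sum_le_sum fun x _ => Finset.sum_le_sum fun y _ => Finset.sum_le_sum fun z _ => key x y z
  simp only [Finset.sum_sub_distrib, Finset.sum_add_distrib] at hbig
  rw [hsum1, hsum2] at hbig  -- careful: hsum1/hsum2 shapes
  linarith
end Paper
namespace Paper
open Finset Real

lemma submod_logb {α β γ : Type*} [Fintype α] [Fintype β] [Fintype γ]
    (p : α → β → γ → ℝ) (hp : ∀ x y z, 0 ≤ p x y z) :
    ∑ x, ∑ z, (∑ y, p x y z) * Real.logb 2 (∑ y, p x y z)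
      + ∑ y, ∑ z, (∑ x, p x y z) * Real.logb 2 (∑ x, p x y z)
    ≤ (∑ x, ∑ y, ∑ z, p x y z * Real.logb 2 (p x y z))
      + ∑ z, (∑ x, ∑ y, p x y z) * Real.logb 2 (∑ x, ∑ y, p x y z) := by
  have h2 : (0:ℝ) < Real.log 2 := Real.log_pos one_lt_two
  have hln := submod_ln p hp
  simp only [Real.logb, ← mul_div_assoc, ← Finset.sum_div, ← add_div]
  exact (div_le_div_iff_of_pos_right h2).2 hln

variable {Ω : Type*} [Fintype Ω] {μ : Ω → ℝ}

lemma condMutInfo_nonneg {α β γ : Type*} [Fintype α] [Fintype β] [Fintype γ]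
    (hμ : ∀ ω, 0 ≤ μ ω) (X : Ω → α) (Y : Ω → β) (Z : Ω → γ) :
    0 ≤ condMutInfo μ X Y Z := by
  classical
  set p : α → β → γ → ℝ := fun x y z => prob μ (fun ω => (X ω, Y ω, Z ω)) (x, y, z) with hpdef
  have hp0 : ∀ x y z, 0 ≤ p x y z := fun x y z => prob_nonneg hμ _ _
  have m1 : ∀ x z, prob μ (fun ω => (X ω, Z ω)) (x, z) = ∑ y, p x y z := by
    intro x z
    simp only [hpdef]
    unfold prob pe
    rw [Finset.sum_comm]
    refine Finset.sum_congr rfl fun ω _ => ?_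
    simp only [Prod.mk.injEq]
    have h : ∀ y : β, (if X ω = x ∧ Y ω = y ∧ Z ω = z then μ ω else 0)
        = if Y ω = y then (if X ω = x ∧ Z ω = z then μ ω else 0) else 0 := by
      intro y; by_cases h : Y ω = y <;> simp [h]
    rw [Finset.sum_congr rfl fun y _ => h y, Finset.sum_ite_eq]
    simp
  have m2 : ∀ y z, prob μ (fun ω => (Y ω, Z ω)) (y, z) = ∑ x, p x y z := by
    intro y z
    simp only [hpdef]
    unfold prob pe
    rw [Finset.sum_comm]
    refine Finset.sum_congr rfl fun ω _ => ?_
    simp only [Prod.mk.injEq]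
    have h : ∀ x : α, (if X ω = x ∧ Y ω = y ∧ Z ω = z then μ ω else 0)
        = if X ω = x then (if Y ω = y ∧ Z ω = z then μ ω else 0) else 0 := by
      intro x; by_cases h : X ω = x <;> simp [h]
    rw [Finset.sum_congr rfl fun x _ => h x, Finset.sum_ite_eq]
    simp
  have m3 : ∀ z, prob μ Z z = ∑ x, ∑ y, p x y z := by
    intro z
    simp only [hpdef]
    unfold prob pe
    simp only [Prod.mk.injEq]
    rw [sum_rotr (fun x y ω => if X ω = x ∧ Y ω = y ∧ Z ω = z then μ ω else 0)]
    refine Finset.sum_congr rfl fun ω _ => ?_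
    have h : ∀ x y, (if X ω = x ∧ Y ω = y ∧ Z ω = z then μ ω else 0)
        = if X ω = x then (if Y ω = y then (if Z ω = z then μ ω else 0) else 0) else 0 := by
      intro x y
      by_cases h1 : X ω = x <;> by_cases h2 : Y ω = y <;> simp [h1, h2]
    rw [Finset.sum_congr rfl fun x _ => Finset.sum_congr rfl fun y _ => h x y]
    simp [Finset.sum_ite_eq]
  have hH1 : H μ (fun ω => (X ω, Z ω))
      = -∑ x, ∑ z, (∑ y, p x y z) * Real.logb 2 (∑ y, p x y z) := by
    rw [H_univ, Fintype.sum_prod_type]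
    simp only [m1]
  have hH2 : H μ (fun ω => (Y ω, Z ω))
      = -∑ y, ∑ z, (∑ x, p x y z) * Real.logb 2 (∑ x, p x y z) := by
    rw [H_univ, Fintype.sum_prod_type]
    simp only [m2]
  have hH3 : H μ Z = -∑ z, (∑ x, ∑ y, p x y z) * Real.logb 2 (∑ x, ∑ y, p x y z) := by
    rw [H_univ]
    simp only [m3]
  have hHp : H μ (fun ω => (X ω, Y ω, Z ω))
      = -∑ x, ∑ y, ∑ z, p x y z * Real.logb 2 (p x y z) := by
    rw [H_univ, Fintype.sum_prod_type]
    congr 1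
    refine Finset.sum_congr rfl fun x _ => ?_
    rw [Fintype.sum_prod_type]
  unfold condMutInfo
  rw [hH1, hH2, hH3, hHp]
  have := submod_logb p hp0
  linarith

lemma H_const_unit (hμ : IsPMF μ) : H μ (fun _ => ()) = 0 := by
  rw [H_univ]
  have : prob μ (fun _ => ()) () = 1 := by
    unfold prob pe
    simpa using hμ.2
  simp [this]
  try tauto

lemma mutInfo_nonneg {α β : Type*} [Fintype α] [Fintype β]
    (hμ : IsPMF μ) (X : Ω → α) (Y : Ω → β) : 0 ≤ mutInfo μ X Y := by
  have h := condMutInfo_nonneg hμ.1 X Y (fun _ => ())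
  unfold condMutInfo at h
  have e1 : H μ (fun ω => (X ω, ())) = H μ X :=
    H_comp_inj (f := fun a => (a, ())) (fun a b hab => congrArg Prod.fst hab)
  have e2 : H μ (fun ω => (Y ω, ())) = H μ Y :=
    H_comp_inj (f := fun a => (a, ())) (fun a b hab => congrArg Prod.fst hab)
  have e3 : H μ (fun ω => (X ω, Y ω, ())) = H μ (fun ω => (X ω, Y ω)) :=
    H_comp_inj (X := fun ω => (X ω, Y ω)) (f := fun ab => (ab.1, ab.2, ()))
      (fun a b hab => by
        cases a; cases b
        simpa [Prod.ext_iff] using hab)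
  rw [e1, e2, e3, H_const_unit hμ] at h
  unfold mutInfo
  linarith
end Paper
namespace Paper
open Finset Real

lemma sum_ite_const {ι : Type*} [Fintype ι] (c : Prop) [Decidable c] (f : ι → ℝ) :
    ∑ i, (if c then f i else 0) = if c then ∑ i, f i else 0 := by
  by_cases h : c <;> simp [h]

variable {α β : Type} [Fintype α] [Fintype β] {μ : α × β → ℝ} {n : ℕ}
  {ν : α × β × Fin n → ℝ}

section Marginals
variable (hm : ∀ a b, (∑ q, ν (a, b, q)) = μ (a, b))
include hm

lemma probAB (a : α) (b : β) :
    prob ν (fun w => (w.1, w.2.1)) (a, b) = μ (a, b) := by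
  classical
  unfold prob pe
  simp only [Fintype.sum_prod_type, Prod.mk.injEq]
  rw [← hm a b]
  have h : ∀ x y (q : Fin n), (if x = a ∧ y = b then ν (x, y, q) else 0)
      = if x = a then (if y = b then ν (x, y, q) else 0) else 0 := by
    intro x y q; by_cases h1 : x = a <;> simp [h1]
  calc ∑ x, ∑ y, ∑ q, (if x = a ∧ y = b then ν (x, y, q) else 0)
      = ∑ x, ∑ y, ∑ q, (if x = a then (if y = b then ν (x, y, q) else 0) else 0) := by
        refine Finset.sum_congr rfl fun x _ => Finset.sum_congr rfl fun y _ =>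
          Finset.sum_congr rfl fun q _ => h x y q
    _ = ∑ q, ν (a, b, q) := by simp [sum_ite_const, Finset.sum_ite_eq']
    
lemma probA (a : α) : prob ν (fun w => w.1) a = prob μ Prod.fst a := by
  classical
  unfold prob pe
  simp only [Fintype.sum_prod_type]
  have h1 : ∀ x : α, ∑ y, ∑ q, (if x = a then ν (x, y, q) else 0)
      = if x = a then ∑ y, μ (x, y) else 0 := by
    intro x
    by_cases h : x = a <;> simp [h, hm]
  have h2 : ∀ x : α, ∑ y, (if x = a then μ (x, y) else 0)
      = if x = a then ∑ y, μ (x, y) else 0 := fun x => sum_ite_const _ _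
  simp only [h1, h2]

lemma probB (b : β) : prob ν (fun w => w.2.1) b = prob μ Prod.snd b := by
  classical
  unfold prob pe
  simp only [Fintype.sum_prod_type]
  have h1 : ∀ x : α, ∑ y, ∑ q, (if y = b then ν (x, y, q) else 0)
      = ∑ y, (if y = b then μ (x, y) else 0) := by
    intro x
    refine Finset.sum_congr rfl fun y _ => ?_
    by_cases h : y = b <;> simp [h, hm]
  simp only [h1]

end Marginals

lemma probID (a : α) (b : β) :
    prob μ (fun ω => (ω.1, ω.2)) (a, b) = μ (a, b) := by
  classical
  unfold prob pe
  simp only [Fintype.sum_prod_type, Prod.mk.injEq]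
  have h : ∀ x y, (if x = a ∧ y = b then μ (x, y) else 0)
      = if x = a then (if y = b then μ (x, y) else 0) else 0 := by
    intro x y; by_cases h1 : x = a <;> simp [h1]
  simp only [h]
  simp [Finset.sum_ite_eq']

lemma key_identity (μ : α × β → ℝ) (ν : α × β × Fin n → ℝ)
    (hm : ∀ a b, (∑ q, ν (a, b, q)) = μ (a, b))
    (hM : condMutInfo ν (fun w => w.1) (fun w => w.2.1) (fun w => w.2.2) = 0) :
    condMutInfo ν (fun w => w.1) (fun w => w.2.2) (fun w => w.2.1)
      + condMutInfo ν (fun w => w.2.1) (fun w => w.2.2) (fun w => w.1)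
    = mutInfo ν (fun w => (w.1, w.2.1)) (fun w => w.2.2) - mutInfo μ Prod.fst Prod.snd := by
  classical
  have eQB : H ν (fun w => ((w.2.2 : Fin n), (w.2.1 : β)))
      = H ν (fun w => (w.2.1, w.2.2)) :=
    H_comp_inj (X := fun w : α × β × Fin n => (w.2.1, w.2.2)) (f := Prod.swap)
      Prod.swap_injective
  have eBA : H ν (fun w => ((w.2.1 : β), (w.1 : α)))
      = H ν (fun w => (w.1, w.2.1)) :=
    H_comp_inj (X := fun w : α × β × Fin n => (w.1, w.2.1)) (f := Prod.swap)
      Prod.swap_injective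
  have eQA : H ν (fun w => ((w.2.2 : Fin n), (w.1 : α)))
      = H ν (fun w => (w.1, w.2.2)) :=
    H_comp_inj (X := fun w : α × β × Fin n => (w.1, w.2.2)) (f := Prod.swap)
      Prod.swap_injective
  have eT1 : H ν (fun w => ((w.1 : α), (w.2.2 : Fin n), (w.2.1 : β))) = H ν (fun w => w) :=
    H_comp_inj (X := fun w : α × β × Fin n => w)
      (f := fun w : α × β × Fin n => (w.1, w.2.2, w.2.1))
      (fun u v h => by
        obtain ⟨u1, u2, u3⟩ := u; obtain ⟨v1, v2, v3⟩ := v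
        simp only [Prod.mk.injEq] at h ⊢; tauto)
  have eT2 : H ν (fun w => ((w.2.1 : β), (w.2.2 : Fin n), (w.1 : α))) = H ν (fun w => w) :=
    H_comp_inj (X := fun w : α × β × Fin n => w)
      (f := fun w : α × β × Fin n => (w.2.1, w.2.2, w.1))
      (fun u v h => by
        obtain ⟨u1, u2, u3⟩ := u; obtain ⟨v1, v2, v3⟩ := v
        simp only [Prod.mk.injEq] at h ⊢; tauto)
  have eT3 : H ν (fun w => (((w.1 : α), (w.2.1 : β)), (w.2.2 : Fin n))) = H ν (fun w => w) :=
    H_comp_inj (X := fun w : α × β × Fin n => w)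
      (f := fun w : α × β × Fin n => ((w.1, w.2.1), w.2.2))
      (fun u v h => by
        obtain ⟨u1, u2, u3⟩ := u; obtain ⟨v1, v2, v3⟩ := v
        simp only [Prod.mk.injEq] at h ⊢; tauto)
  have eT0 : H ν (fun w => ((w.1 : α), (w.2.1 : β), (w.2.2 : Fin n))) = H ν (fun w => w) := rfl
  have eA : H μ Prod.fst = H ν (fun w => w.1) := (H_congr (probA hm)).symm
  have eB : H μ Prod.snd = H ν (fun w => w.2.1) := (H_congr (probB hm)).symm
  have eAB : H μ (fun ω => (Prod.fst ω, Prod.snd ω)) = H ν (fun w => (w.1, w.2.1)) :=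
    H_congr (fun x => by
      obtain ⟨a, b⟩ := x
      rw [probID, probAB hm])
  simp only [condMutInfo, mutInfo] at hM ⊢
  rw [eQB, eBA, eQA, eT1, eT2, eT3, eT0, eA, eB, eAB]
  rw [eT0] at hM
  linarith
end Paper
namespace Paper
open Finset Real

lemma exists_markov {α β : Type} [Fintype α] [Fintype β] (μ : α × β → ℝ) (hμ : IsPMF μ) :
    ∃ (n : ℕ) (ν : α × β × Fin n → ℝ), IsPMF ν ∧
      (∀ a b, (∑ q, ν (a, b, q)) = μ (a, b)) ∧
      condMutInfo ν (fun w => w.1) (fun w => w.2.1) (fun w => w.2.2) = 0 := by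
  classical
  set n := Fintype.card (α × β) with hn
  set e : (α × β) ≃ Fin n := Fintype.equivFin (α × β) with he
  refine ⟨n, fun w => if w.2.2 = e (w.1, w.2.1) then μ (w.1, w.2.1) else 0, ⟨?_, ?_⟩, ?_, ?_⟩
  · intro w
    dsimp only
    split
    · exact hμ.1 _
    · exact le_refl 0
  · dsimp only
    rw [Fintype.sum_prod_type]
    have h : ∀ (a : α) (b : β), ∑ q : Fin n, (if q = e (a, b) then μ (a, b) else 0) = μ (a, b) := by
      intro a b
      rw [Finset.sum_ite_eq']
      simp
    calc ∑ a, ∑ x : β × Fin n, (if x.2 = e (a, x.1) then μ (a, x.1) else 0)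
        = ∑ a, ∑ b, ∑ q : Fin n, (if q = e (a, b) then μ (a, b) else 0) := by
          refine Finset.sum_congr rfl fun a _ => ?_
          rw [Fintype.sum_prod_type]
      _ = ∑ a, ∑ b, μ (a, b) := by simp only [h]
      _ = 1 := by rw [← Fintype.sum_prod_type]; exact hμ.2
  · intro a b
    dsimp only
    rw [Finset.sum_ite_eq']
    simp
  · set ν : α × β × Fin n → ℝ := fun w => if w.2.2 = e (w.1, w.2.1) then μ (w.1, w.2.1) else 0
      with hν
    have hsupp : ∀ w, ν w ≠ 0 → w.2.2 = e (w.1, w.2.1) := by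
      intro w hw
      by_contra hc
      exact hw (by simp [hν, hc])
    have hAQ : H ν (fun w => ((w.1 : α), (w.2.2 : Fin n))) = H ν (fun w => (w.1, w.2.1)) := by
      have s1 : H ν (fun w => ((w.1 : α), (w.2.2 : Fin n)))
          = H ν (fun w => (w.1, e (w.1, w.2.1))) :=
        H_congr (prob_congr_support (fun w hw => by rw [hsupp w hw]))
      rw [s1]
      exact H_comp_inj (X := fun w : α × β × Fin n => (w.1, w.2.1))
        (f := fun p : α × β => (p.1, e p)) (fun u v h => e.injective (congrArg Prod.snd h))
    have hBQ : H ν (fun w => ((w.2.1 : β), (w.2.2 : Fin n))) = H ν (fun w => (w.1, w.2.1)) := by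
      have s1 : H ν (fun w => ((w.2.1 : β), (w.2.2 : Fin n)))
          = H ν (fun w => (w.2.1, e (w.1, w.2.1))) :=
        H_congr (prob_congr_support (fun w hw => by rw [hsupp w hw]))
      rw [s1]
      exact H_comp_inj (X := fun w : α × β × Fin n => (w.1, w.2.1))
        (f := fun p : α × β => (p.2, e p)) (fun u v h => e.injective (congrArg Prod.snd h))
    have hABQ : H ν (fun w => ((w.1 : α), (w.2.1 : β), (w.2.2 : Fin n)))
        = H ν (fun w => (w.1, w.2.1)) := by
      have s1 : H ν (fun w => ((w.1 : α), (w.2.1 : β), (w.2.2 : Fin n)))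
          = H ν (fun w => (w.1, w.2.1, e (w.1, w.2.1))) :=
        H_congr (prob_congr_support (fun w hw => by rw [hsupp w hw]))
      rw [s1]
      exact H_comp_inj (X := fun w : α × β × Fin n => (w.1, w.2.1))
        (f := fun p : α × β => (p.1, p.2, e p))
        (fun u v h => e.injective (congrArg (fun x => x.2.2) h))
    have hQ : H ν (fun w => (w.2.2 : Fin n)) = H ν (fun w => (w.1, w.2.1)) := by
      have s1 : H ν (fun w => (w.2.2 : Fin n)) = H ν (fun w => e (w.1, w.2.1)) :=
        H_congr (prob_congr_support (fun w hw => by rw [hsupp w hw]))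
      rw [s1]
      exact H_comp_inj (X := fun w : α × β × Fin n => (w.1, w.2.1)) (f := fun p => e p)
        e.injective
    simp only [condMutInfo]
    rw [hAQ, hBQ, hABQ, hQ]
    ring
end Paper

namespace Paper

theorem twyn_eq_ciwyn_sub_mutInfo' {α β : Type} [Fintype α] [Fintype β]
    (μ : α × β → ℝ) (hμ : IsPMF μ) :
    TWyn μ = CIWyn μ - mutInfo μ Prod.fst Prod.snd := by
  classical
  set c := mutInfo μ Prod.fst Prod.snd with hc
  set ST := { v : ℝ | ∃ (n : ℕ) (ν : α × β × Fin n → ℝ), IsPMF ν ∧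
    (∀ a b, (∑ q, ν (a, b, q)) = μ (a, b)) ∧
    condMutInfo ν (fun w => w.1) (fun w => w.2.1) (fun w => w.2.2) = 0 ∧
    v = condMutInfo ν (fun w => w.1) (fun w => w.2.2) (fun w => w.2.1)
      + condMutInfo ν (fun w => w.2.1) (fun w => w.2.2) (fun w => w.1) } with hST
  set SC := { v : ℝ | ∃ (n : ℕ) (ν : α × β × Fin n → ℝ), IsPMF ν ∧
    (∀ a b, (∑ q, ν (a, b, q)) = μ (a, b)) ∧
    condMutInfo ν (fun w => w.1) (fun w => w.2.1) (fun w => w.2.2) = 0 ∧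
    v = mutInfo ν (fun w => (w.1, w.2.1)) (fun w => w.2.2) } with hSC
  have hT : TWyn μ = sInf ST := rfl
  have hC : CIWyn μ = sInf SC := rfl
  obtain ⟨n0, ν0, hp0, hm0, hM0⟩ := exists_markov μ hμ
  have hTne : ST.Nonempty := ⟨_, n0, ν0, hp0, hm0, hM0, rfl⟩
  have hCne : SC.Nonempty := ⟨_, n0, ν0, hp0, hm0, hM0, rfl⟩
  have hTbdd : BddBelow ST := by
    refine ⟨0, fun v hv => ?_⟩
    obtain ⟨n, ν, hp, hm, hM, hval⟩ := hv
    rw [hval]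
    exact add_nonneg (condMutInfo_nonneg hp.1 _ _ _) (condMutInfo_nonneg hp.1 _ _ _)
  have hCbdd : BddBelow SC := by
    refine ⟨0, fun v hv => ?_⟩
    obtain ⟨n, ν, hp, hm, hM, hval⟩ := hv
    rw [hval]
    exact mutInfo_nonneg hp _ _
  have forward : ∀ v ∈ SC, v - c ∈ ST := by
    rintro v ⟨n, ν, hp, hm, hM, hval⟩
    refine ⟨n, ν, hp, hm, hM, ?_⟩
    have hk := key_identity μ ν hm hM
    rw [← hc] at hk
    rw [hval]
    linarith
  have backward : ∀ v ∈ ST, v + c ∈ SC := by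
    rintro v ⟨n, ν, hp, hm, hM, hval⟩
    refine ⟨n, ν, hp, hm, hM, ?_⟩
    rw [hval]
    have := key_identity μ ν hm hM
    rw [← hc] at this
    linarith
  have ineq1 : TWyn μ + c ≤ CIWyn μ := by
    rw [hC]
    refine le_csInf hCne fun v hv => ?_
    have := csInf_le hTbdd (forward v hv)
    rw [← hT] at this
    linarith
  have ineq2 : CIWyn μ - c ≤ TWyn μ := by
    rw [hT]
    refine le_csInf hTne fun v hv => ?_
    have := csInf_le hCbdd (backward v hv)
    rw [← hC] at this
    linarith
  linarith

end Paper


namespace Paper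

/-- `T_Wyn(A;B) = CI_Wyn(A;B) - I(A;B)`. -/
theorem twyn_eq_ciwyn_sub_mutInfo {α β : Type} [Fintype α] [Fintype β]
    (μ : α × β → ℝ) (hμ : IsPMF μ) :
    TWyn μ = CIWyn μ - mutInfo μ Prod.fst Prod.snd := by
  exact twyn_eq_ciwyn_sub_mutInfo' μ hμ

end Paper
end

section
/- Let S, T be jointly distributed random variables over finite sets 𝒮 × 𝒯, let T₀ ⊆ 𝒯 be such that for all t ∈ T₀, Pr[S ∈ 𝒮_t] ≤ δ, where 𝒮_t = {s ∈ 𝒮 : Pr[S=s | T=t] > 0}, and suppose Pr[T ∈ T₀] ≥ ε. Then I(S;T) ≥ ε·log(1/δ). -/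
namespace Paper

lemma log_sum_ineq {ι : Type*} (s : Finset ι) (a b : ι → ℝ)
    (ha : ∀ i ∈ s, 0 ≤ a i) (hb : ∀ i ∈ s, 0 ≤ b i)
    (hab : ∀ i ∈ s, b i = 0 → a i = 0) :
    (∑ i ∈ s, a i) * Real.log (∑ i ∈ s, a i) - (∑ i ∈ s, a i) * Real.log (∑ i ∈ s, b i)
      ≤ ∑ i ∈ s, a i * (Real.log (a i) - Real.log (b i)) := by
  set A := ∑ i ∈ s, a i with hA
  set B := ∑ i ∈ s, b i with hB
  have hA0 : 0 ≤ A := Finset.sum_nonneg ha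
  have hB0 : 0 ≤ B := Finset.sum_nonneg hb
  rcases eq_or_lt_of_le hB0 with hBz | hBpos
  · have hbz : ∀ i ∈ s, b i = 0 := fun i hi =>
      (Finset.sum_eq_zero_iff_of_nonneg hb).mp hBz.symm i hi
    have haz : ∀ i ∈ s, a i = 0 := fun i hi => hab i hi (hbz i hi)
    have hAz : A = 0 := Finset.sum_eq_zero haz
    rw [hAz, Finset.sum_eq_zero (fun i hi => by rw [haz i hi]; ring)]
    simp
  rcases eq_or_lt_of_le hA0 with hAz | hApos
  · have haz : ∀ i ∈ s, a i = 0 := fun i hi =>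
      (Finset.sum_eq_zero_iff_of_nonneg ha).mp hAz.symm i hi
    rw [← hAz, Finset.sum_eq_zero (fun i hi => by rw [haz i hi]; ring)]
    simp
  have key : ∀ i ∈ s, a i - b i * A / B ≤
      a i * (Real.log (a i) - Real.log (b i)) - a i * (Real.log A - Real.log B) := by
    intro i hi
    rcases eq_or_lt_of_le (ha i hi) with haz | hapos
    · rw [← haz]
      have hb' := hb i hi
      have : 0 ≤ b i * A / B := by positivity
      simp only [zero_mul, zero_sub, sub_zero]
      linarith
    · have hbpos : 0 < b i := by
        rcases eq_or_lt_of_le (hb i hi) with h | h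
        · exact absurd (hab i hi h.symm) (ne_of_gt hapos)
        · exact h
      have hx : Real.log (b i * A / (a i * B)) ≤ b i * A / (a i * B) - 1 :=
        Real.log_le_sub_one_of_pos (by positivity)
      rw [Real.log_div (by positivity) (by positivity), Real.log_mul hbpos.ne' hApos.ne',
        Real.log_mul hapos.ne' hBpos.ne'] at hx
      have hx2 := mul_le_mul_of_nonneg_left hx (ha i hi)
      have h3 : a i * (b i * A / (a i * B)) = b i * A / B := by
        field_simp
      nlinarith [hx2, h3]
  have hsum := Finset.sum_le_sum key
  have h1 : ∑ i ∈ s, (a i - b i * A / B) = 0 := by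
    rw [Finset.sum_sub_distrib]
    have : ∑ i ∈ s, b i * A / B = A := by
      rw [← Finset.sum_div, ← Finset.sum_mul, ← hB]
      field_simp
    rw [this, ← hA]; ring
  have h2 : ∑ i ∈ s, (a i * (Real.log (a i) - Real.log (b i)) - a i * (Real.log A - Real.log B))
      = (∑ i ∈ s, a i * (Real.log (a i) - Real.log (b i))) - A * (Real.log A - Real.log B) := by
    rw [Finset.sum_sub_distrib, ← Finset.sum_mul, ← hA]
  rw [h1, h2] at hsum
  linarith

lemma H_eq_univ {Ω α : Type*} [Fintype Ω] [Fintype α] (μ : Ω → ℝ) (X : Ω → α) :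
    H μ X = -∑ a : α, prob μ X a * Real.logb 2 (prob μ X a) := by
  classical
  unfold H
  congr 1
  refine Finset.sum_subset (Finset.subset_univ _) ?_
  intro a _ ha
  have : prob μ X a = 0 := by
    unfold prob pe
    refine Finset.sum_eq_zero fun ω _ => ?_
    rw [if_neg]
    intro h
    exact ha (Finset.mem_image.mpr ⟨ω, Finset.mem_univ ω, h⟩)
  simp [this]


open Classical in
/-- if for each `t ∈ T₀` the support `𝒮_t` of `p_{S|T=t}` has
`Pr[S ∈ 𝒮_t] ≤ δ`, and `Pr[T ∈ T₀] ≥ ε`, then `I(S;T) ≥ ε·log(1/δ)`. -/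
theorem mutInfo_ge_of_small_supports {S T : Type} [Fintype S] [Fintype T]
    (μ : S × T → ℝ) (hμ : IsPMF μ) (T₀ : Finset T) (δ ε : ℝ)
    (hδ0 : 0 < δ) (hδ1 : δ ≤ 1) (hε0 : 0 ≤ ε) (hε1 : ε ≤ 1)
    (hsmall : ∀ t ∈ T₀, pe μ (fun p => 0 < μ (p.1, t)) ≤ δ)
    (hbig : ε ≤ pe μ (fun p => p.2 ∈ T₀)) :
    mutInfo μ Prod.fst Prod.snd ≥ ε * Real.logb 2 (1 / δ) := by
  classical
  obtain ⟨hμ0, hμ1⟩ := hμ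
  set pS : S → ℝ := fun s => ∑ t, μ (s, t) with hpS
  set pT : T → ℝ := fun t => ∑ s, μ (s, t) with hpT
  have hpS0 : ∀ s, 0 ≤ pS s := fun s => Finset.sum_nonneg fun _ _ => hμ0 _
  have hpT0 : ∀ t, 0 ≤ pT t := fun t => Finset.sum_nonneg fun _ _ => hμ0 _
  have hle_pS : ∀ s t, μ (s, t) ≤ pS s := fun s t =>
    Finset.single_le_sum (fun t' _ => hμ0 (s, t')) (Finset.mem_univ t)
  have hle_pT : ∀ s t, μ (s, t) ≤ pT t := fun s t =>
    Finset.single_le_sum (fun s' _ => hμ0 (s', t)) (Finset.mem_univ s)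
  have hpSsum : ∑ s, pS s = 1 := by rw [← hμ1, Fintype.sum_prod_type]
  -- prob computations
  have hprobS : ∀ s, prob μ Prod.fst s = pS s := by
    intro s
    unfold prob pe
    rw [Fintype.sum_prod_type]
    calc ∑ s' : S, ∑ t : T, (if (s', t).1 = s then μ (s', t) else 0)
        = ∑ s' : S, (if s' = s then ∑ t, μ (s', t) else 0) :=
          Finset.sum_congr rfl fun s' _ => by split <;> simp
      _ = pS s := by simp; rfl
  have hprobT : ∀ t, prob μ Prod.snd t = pT t := by
    intro t
    unfold prob pe
    rw [Fintype.sum_prod_type_right]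
    calc ∑ t' : T, ∑ s : S, (if (s, t').2 = t then μ (s, t') else 0)
        = ∑ t' : T, (if t' = t then ∑ s, μ (s, t') else 0) :=
          Finset.sum_congr rfl fun t' _ => by split <;> simp
      _ = pT t := by simp; rfl
  have hprobJ : ∀ p : S × T, prob μ (fun ω => (ω.1, ω.2)) p = μ p := by
    intro p
    unfold prob pe
    simp
  -- mutual information formula
  have hzero : ∀ x : ℝ, x = 0 → x * Real.logb 2 x = 0 := fun x hx => by simp [hx]
  have hmut : mutInfo μ Prod.fst Prod.snd
      = ∑ p : S × T, μ p * (Real.logb 2 (μ p) - Real.logb 2 (pS p.1) - Real.logb 2 (pT p.2)) := by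
    unfold mutInfo
    rw [H_eq_univ, H_eq_univ, H_eq_univ]
    simp only [hprobS, hprobT, hprobJ]
    have e1 : ∑ s, pS s * Real.logb 2 (pS s)
        = ∑ p : S × T, μ p * Real.logb 2 (pS p.1) := by
      rw [Fintype.sum_prod_type]
      refine Finset.sum_congr rfl fun s _ => ?_
      have h : (fun y : T => μ (s, y) * Real.logb 2 (pS (s, y).1))
          = fun y => μ (s, y) * Real.logb 2 (pS s) := rfl
      rw [h, ← Finset.sum_mul]
    have e2 : ∑ t, pT t * Real.logb 2 (pT t)
        = ∑ p : S × T, μ p * Real.logb 2 (pT p.2) := by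
      rw [Fintype.sum_prod_type_right]
      refine Finset.sum_congr rfl fun t _ => ?_
      have h : (fun x : S => μ (x, t) * Real.logb 2 (pT (x, t).2))
          = fun x => μ (x, t) * Real.logb 2 (pT t) := rfl
      rw [h, ← Finset.sum_mul]
    rw [e1, e2]
    rw [show ∀ x y z : ℝ, -x + -y - -z = z - x - y from fun x y z => by ring]
    rw [← Finset.sum_sub_distrib, ← Finset.sum_sub_distrib]
    exact Finset.sum_congr rfl fun p _ => by ring
  -- auxiliary: zero rows
  have hμ_zero_of_pT : ∀ s t, pT t = 0 → μ (s, t) = 0 := fun s t h =>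
    le_antisymm (h ▸ hle_pT s t) (hμ0 _)
  have hab' : ∀ t, ∀ s : S, pS s * pT t = 0 → μ (s, t) = 0 := by
    intro t s h
    rcases mul_eq_zero.mp h with h | h
    · exact le_antisymm (h ▸ hle_pS s t) (hμ0 _)
    · exact hμ_zero_of_pT s t h
  -- summand rewriting to log-sum form
  have hsummand : ∀ t s, μ (s, t) * (Real.log (μ (s, t)) - Real.log (pS s) - Real.log (pT t))
      = μ (s, t) * (Real.log (μ (s, t)) - Real.log (pS s * pT t)) := by
    intro t s
    rcases eq_or_lt_of_le (hμ0 (s, t)) with h | h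
    · rw [← h]; ring
    · have h1 : 0 < pS s := lt_of_lt_of_le h (hle_pS s t)
      have h2 : 0 < pT t := lt_of_lt_of_le h (hle_pT s t)
      rw [Real.log_mul h1.ne' h2.ne']; ring
  -- key per-t bound (natural log)
  have key : ∀ t : T, (if t ∈ T₀ then pT t * Real.log (1 / δ) else 0)
      ≤ ∑ s, μ (s, t) * (Real.log (μ (s, t)) - Real.log (pS s) - Real.log (pT t)) := by
    intro t
    simp only [hsummand t]
    by_cases ht : t ∈ T₀
    · rw [if_pos ht]
      rcases eq_or_lt_of_le (hpT0 t) with hTz | hTpos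
      · have : ∀ s, μ (s, t) = 0 := fun s => hμ_zero_of_pT s t hTz.symm
        rw [← hTz]
        rw [Finset.sum_eq_zero (fun s _ => by rw [this s]; ring)]
        simp
      · set St : Finset S := Finset.univ.filter (fun s => 0 < μ (s, t)) with hSt
        have hres : ∀ f : S → ℝ, (∀ s, μ (s, t) = 0 → f s = 0) →
            ∑ s ∈ St, f s = ∑ s, f s := by
          intro f hf
          refine Finset.sum_subset (Finset.subset_univ _) fun s _ hs => ?_
          refine hf s ?_
          by_contra h
          exact hs (Finset.mem_filter.mpr ⟨Finset.mem_univ s,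
            lt_of_le_of_ne (hμ0 _) (Ne.symm h)⟩)
        have hAeq : ∑ s ∈ St, μ (s, t) = pT t := hres _ (fun s h => h)
        set P : ℝ := ∑ s ∈ St, pS s with hP
        have hPδ : P ≤ δ := by
          have : pe μ (fun p => 0 < μ (p.1, t)) = P := by
            unfold pe
            rw [Fintype.sum_prod_type]
            calc ∑ s : S, ∑ t' : T, (if 0 < μ ((s, t').1, t) then μ (s, t') else 0)
                = ∑ s : S, (if 0 < μ (s, t) then pS s else 0) :=
                  Finset.sum_congr rfl fun s _ => by split <;> rename_i h <;> simp [h, hpS]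
              _ = P := (Finset.sum_filter _ _).symm
          rw [← this]
          exact hsmall t ht
        have hPge : pT t ≤ P := by
          rw [← hAeq]
          exact Finset.sum_le_sum fun s _ => hle_pS s t
        have hPpos : 0 < P := lt_of_lt_of_le hTpos hPge
        have hls := log_sum_ineq St (fun s => μ (s, t)) (fun s => pS s * pT t)
          (fun s _ => hμ0 _) (fun s _ => mul_nonneg (hpS0 s) (hpT0 t))
          (fun s _ h => hab' t s h)
        rw [hAeq] at hls
        have hBeq : ∑ s ∈ St, pS s * pT t = P * pT t := by
          rw [← Finset.sum_mul]
        rw [hBeq] at hls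
        have hmain : ∑ s ∈ St, μ (s, t) * (Real.log (μ (s, t)) - Real.log (pS s * pT t))
            = ∑ s, μ (s, t) * (Real.log (μ (s, t)) - Real.log (pS s * pT t)) :=
          hres _ (fun s h => by rw [h]; ring)
        rw [hmain] at hls
        refine le_trans ?_ hls
        rw [Real.log_mul hPpos.ne' hTpos.ne', one_div, Real.log_inv]
        have hlogP : Real.log P ≤ Real.log δ := Real.log_le_log hPpos hPδ
        nlinarith [hlogP, hTpos.le]
    · rw [if_neg ht]
      have hls := log_sum_ineq Finset.univ (fun s => μ (s, t)) (fun s => pS s * pT t)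
        (fun s _ => hμ0 _) (fun s _ => mul_nonneg (hpS0 s) (hpT0 t))
        (fun s _ h => hab' t s h)
      have hB : ∑ s, pS s * pT t = pT t := by
        rw [← Finset.sum_mul, hpSsum, one_mul]
      rw [hB] at hls
      calc (0:ℝ) = pT t * Real.log (pT t) - pT t * Real.log (pT t) := by ring
        _ ≤ _ := hls
  -- sum the key bounds
  have hQ : pe μ (fun p => p.2 ∈ T₀) = ∑ t ∈ T₀, pT t := by
    unfold pe
    rw [Fintype.sum_prod_type_right]
    trans (∑ t : T, if t ∈ T₀ then pT t else 0)
    · refine Finset.sum_congr rfl fun t _ => ?_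
      by_cases h : t ∈ T₀ <;> simp [h, hpT]
    · rw [Finset.sum_ite_mem, Finset.univ_inter]
  have hlog2 : (0:ℝ) < Real.log 2 := Real.log_pos (by norm_num)
  have hlogδ : 0 ≤ Real.log (1 / δ) := Real.log_nonneg (by
    rw [le_div_iff₀ hδ0]; linarith)
  have hsumkey : ε * Real.log (1 / δ)
      ≤ ∑ t, ∑ s, μ (s, t) * (Real.log (μ (s, t)) - Real.log (pS s) - Real.log (pT t)) := by
    have h1 : ∑ t, (if t ∈ T₀ then pT t * Real.log (1 / δ) else 0)
        = (∑ t ∈ T₀, pT t) * Real.log (1 / δ) := by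
      rw [Finset.sum_ite_mem, Finset.univ_inter, Finset.sum_mul]
    have h2 := Finset.sum_le_sum fun t (_ : t ∈ Finset.univ) => key t
    rw [h1] at h2
    refine le_trans ?_ h2
    have : ε ≤ ∑ t ∈ T₀, pT t := by rw [← hQ]; exact hbig
    exact mul_le_mul_of_nonneg_right this hlogδ
  -- convert to logb and conclude
  rw [hmut]
  have hconv : ∑ p : S × T, μ p * (Real.logb 2 (μ p) - Real.logb 2 (pS p.1) - Real.logb 2 (pT p.2))
      = (∑ t, ∑ s, μ (s, t) * (Real.log (μ (s, t)) - Real.log (pS s) - Real.log (pT t))) / Real.log 2 := by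
    rw [Finset.sum_div]
    rw [Fintype.sum_prod_type_right]
    refine Finset.sum_congr rfl fun t _ => ?_
    rw [Finset.sum_div]
    refine Finset.sum_congr rfl fun s _ => ?_
    unfold Real.logb
    field_simp
  rw [hconv]
  rw [ge_iff_le, Real.logb, ← mul_div_assoc]
  exact div_le_div_of_nonneg_right hsumkey hlog2.le

end Paper
end

section
/- For any 2-party protocol Π with input distribution (X,Y) and transcript M, the internal information cost from party 1 to party 2 is bounded by the expected number of bits sent from party 1 to party 2: I(X;M|Y) ≤ E[number of bits of M sent by party 1]. -/
namespace Paper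

/-- A 2-party communication protocol. Parties send one bit at a time; whose turn
it is (or whether the protocol has halted, `none`) is determined by the
transcript so far together with that party's own input (`turn₁`/`turn₂`;
well-definedness is imposed as a consistency hypothesis on the support of the
input distribution). `next₁`/`next₂` give the bit sent as a function of the
transcript, the party's input and its private randomness; `out₁`/`out₂` give
the parties' outputs. -/
structure Protocol (𝒳 𝒴 ρ₁ ρ₂ 𝒵 : Type*) where
  turn₁ : List Bool → 𝒳 → Option Bool
  turn₂ : List Bool → 𝒴 → Option Bool
  next₁ : List Bool → 𝒳 → ρ₁ → Bool
  next₂ : List Bool → 𝒴 → ρ₂ → Bool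
  out₁ : List Bool → 𝒳 → ρ₁ → 𝒵
  out₂ : List Bool → 𝒴 → ρ₂ → 𝒵

/-- The transcript after `n` steps of the protocol (`some true` means party 1
speaks, `some false` party 2, `none` means the protocol has halted). -/
def Protocol.run {𝒳 𝒴 ρ₁ ρ₂ 𝒵 : Type*} (P : Protocol 𝒳 𝒴 ρ₁ ρ₂ 𝒵)
    (x : 𝒳) (y : 𝒴) (r₁ : ρ₁) (r₂ : ρ₂) : ℕ → List Bool
  | 0 => []
  | n + 1 =>
    let m := P.run x y r₁ r₂ n
    match P.turn₁ m x with
    | none => m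
    | some true => m ++ [P.next₁ m x r₁]
    | some false => m ++ [P.next₂ m y r₂]

/-- Number of bits sent by party 1 during the first `d` steps. -/
def Protocol.count₁ {𝒳 𝒴 ρ₁ ρ₂ 𝒵 : Type*} (P : Protocol 𝒳 𝒴 ρ₁ ρ₂ 𝒵)
    (x : 𝒳) (y : 𝒴) (r₁ : ρ₁) (r₂ : ρ₂) (d : ℕ) : ℕ :=
  ((Finset.range d).filter (fun n => P.turn₁ (P.run x y r₁ r₂ n) x = some true)).card

/-- Number of bits sent by party 2 during the first `d` steps. -/
def Protocol.count₂ {𝒳 𝒴 ρ₁ ρ₂ 𝒵 : Type*} (P : Protocol 𝒳 𝒴 ρ₁ ρ₂ 𝒵)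
    (x : 𝒳) (y : 𝒴) (r₁ : ρ₁) (r₂ : ρ₂) (d : ℕ) : ℕ :=
  ((Finset.range d).filter (fun n => P.turn₁ (P.run x y r₁ r₂ n) x = some false)).card

end Paper

namespace Paper

section Aux
variable {Ω : Type*} [Fintype Ω] {μ : Ω → ℝ}

lemma pe_nonneg (h : ∀ ω, 0 ≤ μ ω) (E : Ω → Prop) : 0 ≤ pe μ E := by
  classical
  refine Finset.sum_nonneg fun ω _ => ?_
  split <;> simp [h ω]

lemma le_pe (h : ∀ ω, 0 ≤ μ ω) {E : Ω → Prop} {ω : Ω} (hE : E ω) : μ ω ≤ pe μ E := by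
  classical
  have : μ ω = if E ω then μ ω else 0 := by simp [hE]
  rw [this, pe]
  exact Finset.single_le_sum (f := fun ω => if E ω then μ ω else 0)
    (fun i _ => by by_cases hi : E i <;> simp [hi, h i]) (Finset.mem_univ ω)

lemma pe_pos (h : ∀ ω, 0 ≤ μ ω) {E : Ω → Prop} {ω : Ω} (hE : E ω) (hω : μ ω ≠ 0) :
    0 < pe μ E := lt_of_lt_of_le (lt_of_le_of_ne (h ω) (Ne.symm hω)) (le_pe h hE)

lemma pe_exists {E : Ω → Prop} (h : pe μ E ≠ 0) : ∃ ω, E ω ∧ μ ω ≠ 0 := by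
  classical
  by_contra hc
  push_neg at hc
  apply h
  rw [pe]
  refine Finset.sum_eq_zero fun ω _ => ?_
  by_cases hE : E ω
  · simp [hE, hc ω hE]
  · simp [hE]

lemma pe_congr {E F : Ω → Prop} (h : ∀ ω, E ω ↔ F ω) : pe μ E = pe μ F := by
  classical
  unfold pe; exact Finset.sum_congr rfl fun ω _ => by rw [if_congr (h ω) rfl rfl]

lemma pe_split (E : Ω → Prop) (f : Ω → Bool) :
    pe μ (fun ω => E ω ∧ f ω = true) + pe μ (fun ω => E ω ∧ f ω = false) = pe μ E := by
  classical
  unfold pe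
  rw [← Finset.sum_add_distrib]
  refine Finset.sum_congr rfl fun ω _ => ?_
  by_cases hE : E ω <;> cases h : f ω <;> simp [hE, h]

open Classical in
lemma sum_fiber {γ : Type*} (μ : Ω → ℝ) (Z : Ω → γ) (φ : γ → ℝ) :
    ∑ a ∈ Finset.univ.image Z, prob μ Z a * φ a = ∑ ω, μ ω * φ (Z ω) := by
  classical
  unfold prob pe
  rw [Finset.sum_congr rfl (fun a _ => Finset.sum_mul _ _ _)]
  rw [Finset.sum_comm]
  refine Finset.sum_congr rfl fun ω _ => ?_
  have : ∀ a, (if Z ω = a then μ ω else 0) * φ a = if Z ω = a then μ ω * φ (Z ω) else 0 := by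
    intro a; split
    · next h => rw [h]
    · ring
  rw [Finset.sum_congr rfl fun a _ => this a]
  simp [Finset.sum_ite_eq]

lemma H_eq {γ : Type*} (μ : Ω → ℝ) (Z : Ω → γ) :
    H μ Z = -∑ ω, μ ω * Real.logb 2 (prob μ Z (Z ω)) := by
  classical
  rw [H, sum_fiber μ Z (fun a => Real.logb 2 (prob μ Z a))]

end Aux

lemma log_part {a b : ℝ} (ha : 0 < a) (hb : 0 < b) :
    a * (Real.log (a + b) - Real.log a) ≤ a * Real.log 2 + (a + b) / 2 - a := by
  have hab : (0:ℝ) < a + b := by linarith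
  have h1 : Real.log ((a + b) / (2 * a)) ≤ (a + b) / (2 * a) - 1 :=
    Real.log_le_sub_one_of_pos (by positivity)
  have h2 : Real.log ((a + b) / (2 * a)) = Real.log (a + b) - Real.log 2 - Real.log a := by
    rw [Real.log_div (ne_of_gt hab) (by positivity), Real.log_mul two_ne_zero (ne_of_gt ha)]
    ring
  rw [h2] at h1
  have h3 := mul_le_mul_of_nonneg_left h1 ha.le
  have h4 : a * ((a + b) / (2 * a) - 1) = (a + b) / 2 - a := by
    field_simp
  rw [h4] at h3
  nlinarith

lemma binary_le {p q : ℝ} (hp : 0 ≤ p) (hq : 0 ≤ q) :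
    p * (Real.logb 2 (p + q) - Real.logb 2 p) + q * (Real.logb 2 (p + q) - Real.logb 2 q)
      ≤ p + q := by
  have hlog2 : (0:ℝ) < Real.log 2 := Real.log_pos one_lt_two
  rcases eq_or_lt_of_le hp with hp0 | hp0
  · rw [← hp0]; simp; linarith
  rcases eq_or_lt_of_le hq with hq0 | hq0
  · rw [← hq0]; simp; linarith
  have h1 := log_part hp0 hq0
  have h2 := log_part hq0 hp0
  have e : q * (Real.log (q + p) - Real.log q) = q * (Real.log (p + q) - Real.log q) := by
    rw [add_comm q p]
  rw [e] at h2
  have hsum : p * (Real.log (p + q) - Real.log p) + q * (Real.log (p + q) - Real.log q)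
      ≤ (p + q) * Real.log 2 := by nlinarith
  simp only [Real.logb]
  rw [div_sub_div_same, div_sub_div_same, ← mul_div_assoc, ← mul_div_assoc, ← add_div]
  rw [div_le_iff₀ hlog2]
  linarith

lemma key_ineq {𝒳 : Type*} [Fintype 𝒳] (w : 𝒳 × Bool → ℝ) (hw : ∀ p, 0 ≤ w p) :
    ∑ p : 𝒳 × Bool, w p * (Real.logb 2 (w p) + Real.logb 2 (∑ r : 𝒳 × Bool, w r)
      - Real.logb 2 (w (p.1, true) + w (p.1, false))
      - Real.logb 2 (∑ x : 𝒳, w (x, p.2))) ≤ ∑ p : 𝒳 × Bool, w p := by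
  have split : ∀ p : 𝒳 × Bool,
      w p * (Real.logb 2 (w p) + Real.logb 2 (∑ r : 𝒳 × Bool, w r)
        - Real.logb 2 (w (p.1, true) + w (p.1, false))
        - Real.logb 2 (∑ x : 𝒳, w (x, p.2)))
      = w p * (Real.logb 2 (w p) - Real.logb 2 (w (p.1, true) + w (p.1, false)))
        + w p * (Real.logb 2 (∑ r : 𝒳 × Bool, w r) - Real.logb 2 (∑ x : 𝒳, w (x, p.2))) := by
    intro p; ring
  rw [Finset.sum_congr rfl fun p _ => split p, Finset.sum_add_distrib]
  have part1 : ∑ p : 𝒳 × Bool,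
      w p * (Real.logb 2 (w p) - Real.logb 2 (w (p.1, true) + w (p.1, false))) ≤ 0 := by
    refine Finset.sum_nonpos fun p _ => ?_
    rcases eq_or_lt_of_le (hw p) with h0 | h0
    · rw [← h0]; simp
    · have hle : w p ≤ w (p.1, true) + w (p.1, false) := by
        rcases p with ⟨x, b⟩
        cases b
        · have := hw (x, true); simp; linarith
        · have := hw (x, false); simp; linarith
      have := (Real.logb_le_logb one_lt_two h0 (lt_of_lt_of_le h0 hle)).mpr hle
      have hd : Real.logb 2 (w p) - Real.logb 2 (w (p.1, true) + w (p.1, false)) ≤ 0 := by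
        linarith
      exact mul_nonpos_of_nonneg_of_nonpos (hw p) hd
  have part2 : ∑ p : 𝒳 × Bool,
      w p * (Real.logb 2 (∑ r : 𝒳 × Bool, w r) - Real.logb 2 (∑ x : 𝒳, w (x, p.2)))
      ≤ ∑ p : 𝒳 × Bool, w p := by
    have regroup : ∀ (f : Bool → ℝ), ∑ p : 𝒳 × Bool, w p * f p.2
        = (∑ x : 𝒳, w (x, true)) * f true + (∑ x : 𝒳, w (x, false)) * f false := by
      intro f
      rw [Fintype.sum_prod_type]
      rw [Finset.sum_congr rfl fun x _ => Fintype.sum_bool _]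
      simp only []
      rw [Finset.sum_add_distrib, ← Finset.sum_mul, ← Finset.sum_mul]
    have hW : ∑ r : 𝒳 × Bool, w r = (∑ x : 𝒳, w (x, true)) + (∑ x : 𝒳, w (x, false)) := by
      rw [Fintype.sum_prod_type]
      rw [Finset.sum_congr rfl fun x _ => Fintype.sum_bool _]
      rw [Finset.sum_add_distrib]
    rw [regroup (fun b => Real.logb 2 (∑ r : 𝒳 × Bool, w r) - Real.logb 2 (∑ x : 𝒳, w (x, b)))]
    rw [hW]
    have hp : 0 ≤ ∑ x : 𝒳, w (x, true) := Finset.sum_nonneg fun x _ => hw _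
    have hq : 0 ≤ ∑ x : 𝒳, w (x, false) := Finset.sum_nonneg fun x _ => hw _
    exact binary_le hp hq
  linarith

section Proto
variable {𝒳 𝒴 ρ₁ ρ₂ 𝒵 : Type*} (P : Protocol 𝒳 𝒴 ρ₁ ρ₂ 𝒵)

/-- Constraints on party 1's randomness for the transcript to be `m`. -/
def condA (y : 𝒴) (x : 𝒳) (m : List Bool) (r₁ : ρ₁) : Prop :=
  ∀ l b, l ++ [b] <+: m → P.turn₂ l y = some true → b = P.next₁ l x r₁

/-- Constraints on party 2's randomness for the transcript after `n` steps to be `m`. -/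
def condB (n : ℕ) (y : 𝒴) (m : List Bool) (r₂ : ρ₂) : Prop :=
  m.length ≤ n ∧
  (∀ l (b : Bool), l ++ [b] <+: m →
    P.turn₂ l y ≠ none ∧ (P.turn₂ l y = some false → b = P.next₂ l y r₂)) ∧
  (m.length < n → P.turn₂ m y = none)

lemma concat_eq_concat_iff {α : Type*} {l m : List α} {b c : α} :
    l ++ [b] = m ++ [c] ↔ l = m ∧ b = c := by
  constructor
  · intro h
    have hlen : l.length = m.length := by
      have := congrArg List.length h; simpa using this
    simpa using List.append_inj h hlen
  · rintro ⟨rfl, rfl⟩; rfl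

lemma concat_prefix_concat_iff {α : Type*} {l m : List α} {b c : α} :
    l ++ [b] <+: m ++ [c] ↔ l ++ [b] <+: m ∨ (l = m ∧ b = c) := by
  rw [List.prefix_concat_iff, concat_eq_concat_iff]
  tauto

variable {x : 𝒳} {y : 𝒴} {r₁ : ρ₁} {r₂ : ρ₂}

lemma prefix_concat' {α : Type*} (m : List α) (b : α) : m <+: m ++ [b] := ⟨[b], rfl⟩

lemma run_succ_none {n : ℕ} (h : P.turn₁ (P.run x y r₁ r₂ n) x = none) :
    P.run x y r₁ r₂ (n + 1) = P.run x y r₁ r₂ n := by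
  simp [Protocol.run, h]

lemma run_succ_true {n : ℕ} (h : P.turn₁ (P.run x y r₁ r₂ n) x = some true) :
    P.run x y r₁ r₂ (n + 1) = P.run x y r₁ r₂ n ++ [P.next₁ (P.run x y r₁ r₂ n) x r₁] := by
  simp [Protocol.run, h]

lemma run_succ_false {n : ℕ} (h : P.turn₁ (P.run x y r₁ r₂ n) x = some false) :
    P.run x y r₁ r₂ (n + 1) = P.run x y r₁ r₂ n ++ [P.next₂ (P.run x y r₁ r₂ n) y r₂] := by
  simp [Protocol.run, h]

lemma run_length_le (n : ℕ) : (P.run x y r₁ r₂ n).length ≤ n := by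
  induction n with
  | zero => simp [Protocol.run]
  | succ n ih =>
    rcases h : P.turn₁ (P.run x y r₁ r₂ n) x with _ | b
    · rw [run_succ_none P h]; omega
    · cases b
      · rw [run_succ_false P h]; simp; omega
      · rw [run_succ_true P h]; simp; omega

lemma run_length_eq {n : ℕ} (h : P.turn₁ (P.run x y r₁ r₂ n) x ≠ none) :
    (P.run x y r₁ r₂ n).length = n := by
  induction n with
  | zero => simp [Protocol.run]
  | succ n ih =>
    rcases h' : P.turn₁ (P.run x y r₁ r₂ n) x with _ | b
    · rw [run_succ_none P h'] at h
      exact absurd h' h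
    · have hn : (P.run x y r₁ r₂ n).length = n := ih (by simp [h'])
      cases b
      · rw [run_succ_false P h']; simp [hn]
      · rw [run_succ_true P h']; simp [hn]

lemma run_take (n : ℕ) : (P.run x y r₁ r₂ (n + 1)).take n = P.run x y r₁ r₂ n := by
  rcases h : P.turn₁ (P.run x y r₁ r₂ n) x with _ | b
  · rw [run_succ_none P h]
    exact List.take_of_length_le (run_length_le P n)
  · have hn : (P.run x y r₁ r₂ n).length = n := run_length_eq P (by simp [h])
    cases b
    · have ht := List.take_left (l₁ := P.run x y r₁ r₂ n) (l₂ := [P.next₂ (P.run x y r₁ r₂ n) y r₂])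
      rw [hn] at ht
      rw [run_succ_false P h, ht]
    · have ht := List.take_left (l₁ := P.run x y r₁ r₂ n) (l₂ := [P.next₁ (P.run x y r₁ r₂ n) x r₁])
      rw [hn] at ht
      rw [run_succ_true P h, ht]

theorem run_eq_iff (hc : ∀ m, P.turn₁ m x = P.turn₂ m y) :
    ∀ n (m : List Bool), P.run x y r₁ r₂ n = m ↔ condA P y x m r₁ ∧ condB P n y m r₂ := by
  intro n
  induction n with
  | zero =>
    intro m
    constructor
    · rintro rfl
      refine ⟨?_, ?_, ?_, ?_⟩
      · intro l b hpre
        rw [Protocol.run, List.prefix_nil] at hpre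
        simp at hpre
      · simp [Protocol.run]
      · intro l b hpre
        rw [Protocol.run, List.prefix_nil] at hpre
        simp at hpre
      · omega
    · rintro ⟨-, hlen, -, -⟩
      rw [Protocol.run]
      simp at hlen
      exact hlen.symm
  | succ n ih =>
    intro m
    constructor
    · rintro rfl
      obtain ⟨hA₀, hB₀len, hB₀mid, hB₀last⟩ :
          condA P y x (P.run x y r₁ r₂ n) r₁ ∧ condB P n y (P.run x y r₁ r₂ n) r₂ :=
        (ih (P.run x y r₁ r₂ n)).mp rfl
      rcases ht : P.turn₁ (P.run x y r₁ r₂ n) x with _ | b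
      · rw [run_succ_none P ht]
        refine ⟨hA₀, ?_, hB₀mid, fun _ => ?_⟩
        · omega
        · rw [← hc _]; exact ht
      · have hlen : (P.run x y r₁ r₂ n).length = n := run_length_eq P (by rw [ht]; simp)
        have ht₂ : P.turn₂ (P.run x y r₁ r₂ n) y = some b := by rw [← hc _]; exact ht
        cases b
        · -- party 2 speaks
          rw [run_succ_false P ht]
          refine ⟨?_, ?_, ?_, ?_⟩
          · intro l c hpre htl
            rcases concat_prefix_concat_iff.mp hpre with h | ⟨rfl, rfl⟩
            · exact hA₀ l c h htl
            · rw [htl] at ht₂; simp at ht₂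
          · simp [hlen]
          · intro l c hpre
            rcases concat_prefix_concat_iff.mp hpre with h | ⟨rfl, rfl⟩
            · exact hB₀mid l c h
            · exact ⟨by simp [ht₂], fun _ => rfl⟩
          · intro hl; simp [hlen] at hl
        · -- party 1 speaks
          rw [run_succ_true P ht]
          refine ⟨?_, ?_, ?_, ?_⟩
          · intro l c hpre htl
            rcases concat_prefix_concat_iff.mp hpre with h | ⟨rfl, rfl⟩
            · exact hA₀ l c h htl
            · rfl
          · simp [hlen]
          · intro l c hpre
            rcases concat_prefix_concat_iff.mp hpre with h | ⟨rfl, rfl⟩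
            · exact hB₀mid l c h
            · refine ⟨by simp [ht₂], fun hf => ?_⟩
              rw [hf] at ht₂; simp at ht₂
          · intro hl; simp [hlen] at hl
    · rintro ⟨hA, hlen, hmid, hlast⟩
      by_cases hm : m.length ≤ n
      · have hrun : P.run x y r₁ r₂ n = m :=
          (ih m).mpr ⟨hA, hm, hmid, fun h => hlast (by omega)⟩
        have hnone : P.turn₂ m y = none := hlast (by omega)
        rw [run_succ_none P (by rw [hrun, hc m]; exact hnone), hrun]
      · have hmlen : m.length = n + 1 := by omega
        set m₀ := m.take n with hm₀
        have hm₀len : m₀.length = n := by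
          rw [hm₀, List.length_take]; omega
        obtain ⟨c, hc'⟩ : ∃ c, m.drop n = [c] := by
          rw [← List.length_eq_one_iff]
          rw [List.length_drop]; omega
        have hmeq : m = m₀ ++ [c] := by
          rw [hm₀, ← hc', List.take_append_drop]
        have hm₀pre : m₀ ++ [c] <+: m := by rw [← hmeq]
        have hrun : P.run x y r₁ r₂ n = m₀ := by
          refine (ih m₀).mpr ⟨?_, by omega, ?_, fun h => by omega⟩
          · intro l b hpre htl
            exact hA l b (hpre.trans (hmeq ▸ (prefix_concat' m₀ c))) htl
          · intro l b hpre
            exact hmid l b (hpre.trans (hmeq ▸ (prefix_concat' m₀ c)))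
        obtain ⟨htnn, htf⟩ := hmid m₀ c hm₀pre
        rcases ht₂ : P.turn₂ m₀ y with _ | b
        · exact absurd ht₂ htnn
        · have ht₁ : P.turn₁ m₀ x = some b := by rw [hc m₀]; exact ht₂
          cases b
          · rw [run_succ_false P (by rw [hrun]; exact ht₁), hrun, hmeq,
              htf ht₂]
          · rw [run_succ_true P (by rw [hrun]; exact ht₁), hrun, hmeq,
              hA m₀ c hm₀pre ht₂]

lemma condA_concat_of_ne (h : P.turn₂ m y ≠ some true) (b : Bool) :
    condA P y x (m ++ [b]) r₁ ↔ condA P y x m r₁ := by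
  constructor
  · intro hA l c hpre htl
    exact hA l c (hpre.trans (prefix_concat' m b)) htl
  · intro hA l c hpre htl
    rcases concat_prefix_concat_iff.mp hpre with h' | ⟨rfl, rfl⟩
    · exact hA l c h' htl
    · exact absurd htl h
  
lemma condA_concat_true (h : P.turn₂ m y = some true) (b : Bool) :
    condA P y x (m ++ [b]) r₁ ↔ condA P y x m r₁ ∧ b = P.next₁ m x r₁ := by
  constructor
  · intro hA
    refine ⟨fun l c hpre htl => hA l c (hpre.trans (prefix_concat' m b)) htl, ?_⟩
    exact hA m b (List.prefix_refl _) h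
  · rintro ⟨hA, hb⟩ l c hpre htl
    rcases concat_prefix_concat_iff.mp hpre with h' | ⟨rfl, rfl⟩
    · exact hA l c h' htl
    · exact hb

lemma condB_concat_true {n : ℕ} (hn : m.length = n) (h : P.turn₂ m y = some true) (b : Bool) :
    condB P (n + 1) y (m ++ [b]) r₂ ↔ condB P n y m r₂ := by
  constructor
  · rintro ⟨hlen, hmid, -⟩
    refine ⟨by omega, ?_, fun hl => by omega⟩
    intro l c hpre
    exact hmid l c (hpre.trans (prefix_concat' m b))
  · rintro ⟨hlen, hmid, -⟩
    refine ⟨by simp [hn], ?_, fun hl => by simp [hn] at hl⟩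
    intro l c hpre
    rcases concat_prefix_concat_iff.mp hpre with h' | ⟨rfl, rfl⟩
    · exact hmid l c h'
    · exact ⟨by simp [h], fun hf => by rw [hf] at h; simp at h⟩

end Proto

section Probs
variable {𝒳 𝒴 ρ₁ ρ₂ : Type}
    [Fintype 𝒳] [Fintype 𝒴] [Fintype ρ₁] [Fintype ρ₂]
    (νin : 𝒳 × 𝒴 → ℝ) (π₁ : ρ₁ → ℝ) (π₂ : ρ₂ → ℝ) (P : Protocol 𝒳 𝒴 ρ₁ ρ₂ Unit)

/-- Probability (over party 1's randomness) of satisfying party 1's transcript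
constraints. -/
noncomputable def pA (x : 𝒳) (y : 𝒴) (m : List Bool) : ℝ := pe π₁ (condA P y x m)

/-- Probability (over party 2's randomness) of satisfying party 2's transcript
constraints. -/
noncomputable def pB (n : ℕ) (y : 𝒴) (m : List Bool) : ℝ := pe π₂ (condB P n y m)

lemma inner_sum (x : 𝒳) (y : 𝒴)
    (hc : νin (x, y) ≠ 0 → ∀ m, P.turn₁ m x = P.turn₂ m y) (n : ℕ) (m : List Bool) :
    ∑ r : ρ₁ × ρ₂, (if P.run x y r.1 r.2 n = m then νin (x, y) * π₁ r.1 * π₂ r.2 else 0)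
      = νin (x, y) * pA π₁ P x y m * pB π₂ P n y m := by
  classical
  by_cases hν : νin (x, y) = 0
  · simp [hν]
  · have hcon := hc hν
    have hterm : ∀ r : ρ₁ × ρ₂,
        (if P.run x y r.1 r.2 n = m then νin (x, y) * π₁ r.1 * π₂ r.2 else 0)
        = νin (x, y) * ((if condA P y x m r.1 then π₁ r.1 else 0)
            * (if condB P n y m r.2 then π₂ r.2 else 0)) := by
      intro r
      rw [if_congr (run_eq_iff P hcon n m) rfl rfl]
      by_cases hA : condA P y x m r.1 <;> by_cases hB : condB P n y m r.2 <;>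
        simp [hA, hB] <;> ring
    rw [Finset.sum_congr rfl fun r _ => hterm r, ← Finset.mul_sum]
    rw [Fintype.sum_prod_type]
    rw [mul_assoc]
    congr 1
    rw [pA, pB, pe, pe, Finset.sum_mul_sum]

lemma prob_triple
    (hc : ∀ x y, νin (x, y) ≠ 0 → ∀ m, P.turn₁ m x = P.turn₂ m y)
    (n : ℕ) (x : 𝒳) (y : 𝒴) (m : List Bool) :
    prob (fun ω : (𝒳 × 𝒴) × ρ₁ × ρ₂ => νin ω.1 * π₁ ω.2.1 * π₂ ω.2.2)
        (fun ω => (ω.1.1, P.run ω.1.1 ω.1.2 ω.2.1 ω.2.2 n, ω.1.2)) (x, m, y)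
      = νin (x, y) * pA π₁ P x y m * pB π₂ P n y m := by
  classical
  rw [prob, pe, Fintype.sum_prod_type]
  dsimp only
  trans (∑ ab : 𝒳 × 𝒴, if ab = (x, y) then
      (∑ r : ρ₁ × ρ₂, if P.run x y r.1 r.2 n = m then νin (x, y) * π₁ r.1 * π₂ r.2 else 0)
    else 0)
  · refine Finset.sum_congr rfl fun ab _ => ?_
    rcases ab with ⟨a, b⟩
    by_cases ha : a = x
    · subst ha
      by_cases hb : b = y
      · subst hb
        rw [if_pos rfl]
        refine Finset.sum_congr rfl fun r _ => ?_
        by_cases hr : P.run a b r.1 r.2 n = m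
        · simp [hr]
        · simp [hr, Prod.mk.injEq]
      · rw [if_neg (by simp [hb])]
        refine Finset.sum_eq_zero fun r _ => ?_
        rw [if_neg (by simp [Prod.mk.injEq, hb])]
    · rw [if_neg (by simp [ha])]
      refine Finset.sum_eq_zero fun r _ => ?_
      rw [if_neg (by simp [Prod.mk.injEq, ha])]
  rw [Finset.sum_ite_eq' Finset.univ (x, y)
    (fun _ => ∑ r : ρ₁ × ρ₂, if P.run x y r.1 r.2 n = m
      then νin (x, y) * π₁ r.1 * π₂ r.2 else 0)]
  rw [if_pos (Finset.mem_univ _)]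
  exact inner_sum νin π₁ π₂ P x y (hc x y) n m

lemma prob_pair
    (hc : ∀ x y, νin (x, y) ≠ 0 → ∀ m, P.turn₁ m x = P.turn₂ m y)
    (n : ℕ) (y : 𝒴) (m : List Bool) :
    prob (fun ω : (𝒳 × 𝒴) × ρ₁ × ρ₂ => νin ω.1 * π₁ ω.2.1 * π₂ ω.2.2)
        (fun ω => (P.run ω.1.1 ω.1.2 ω.2.1 ω.2.2 n, ω.1.2)) (m, y)
      = (∑ x : 𝒳, νin (x, y) * pA π₁ P x y m) * pB π₂ P n y m := by
  classical
  rw [prob, pe, Fintype.sum_prod_type]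
  dsimp only
  trans (∑ ab : 𝒳 × 𝒴, if ab.2 = y then
      (∑ r : ρ₁ × ρ₂, if P.run ab.1 y r.1 r.2 n = m
        then νin (ab.1, y) * π₁ r.1 * π₂ r.2 else 0)
    else 0)
  · refine Finset.sum_congr rfl fun ab _ => ?_
    rcases ab with ⟨a, b⟩
    dsimp only
    by_cases hb : b = y
    · subst hb
      rw [if_pos rfl]
      refine Finset.sum_congr rfl fun r _ => ?_
      by_cases hr : P.run a b r.1 r.2 n = m
      · simp [hr]
      · simp [hr, Prod.mk.injEq]
    · rw [if_neg hb]
      refine Finset.sum_eq_zero fun r _ => ?_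
      rw [if_neg (by simp [Prod.mk.injEq, hb])]
  rw [Fintype.sum_prod_type]
  dsimp only
  have hy : ∀ a : 𝒳, (∑ b : 𝒴, if b = y then
      (∑ r : ρ₁ × ρ₂, if P.run a y r.1 r.2 n = m
        then νin (a, y) * π₁ r.1 * π₂ r.2 else 0) else 0)
      = νin (a, y) * pA π₁ P a y m * pB π₂ P n y m := by
    intro a
    rw [Finset.sum_ite_eq' Finset.univ y
      (fun _ => ∑ r : ρ₁ × ρ₂, if P.run a y r.1 r.2 n = m
        then νin (a, y) * π₁ r.1 * π₂ r.2 else 0)]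
    rw [if_pos (Finset.mem_univ _)]
    exact inner_sum νin π₁ π₂ P a y (hc a y) n m
  rw [Finset.sum_congr rfl fun a _ => hy a, Finset.sum_mul]

end Probs

section Step
variable {𝒳 𝒴 ρ₁ ρ₂ : Type}
    [Fintype 𝒳] [Fintype 𝒴] [Fintype ρ₁] [Fintype ρ₂]
    (νin : 𝒳 × 𝒴 → ℝ) (π₁ : ρ₁ → ℝ) (π₂ : ρ₂ → ℝ) (P : Protocol 𝒳 𝒴 ρ₁ ρ₂ Unit)

/-- The joint distribution of inputs and private randomness. -/
noncomputable def muP : (𝒳 × 𝒴) × ρ₁ × ρ₂ → ℝ :=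
  fun ω => νin ω.1 * π₁ ω.2.1 * π₂ ω.2.2

/-- The triple `(X, Mₙ, Y)` as a random variable. -/
def Tfun (n : ℕ) : (𝒳 × 𝒴) × ρ₁ × ρ₂ → 𝒳 × List Bool × 𝒴 :=
  fun ω => (ω.1.1, P.run ω.1.1 ω.1.2 ω.2.1 ω.2.2 n, ω.1.2)

/-- The pair `(Mₙ, Y)` as a random variable. -/
def Ufun (n : ℕ) : (𝒳 × 𝒴) × ρ₁ × ρ₂ → List Bool × 𝒴 :=
  fun ω => (P.run ω.1.1 ω.1.2 ω.2.1 ω.2.2 n, ω.1.2)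

/-- Per-step log-ratio increment. -/
noncomputable def Dv (n : ℕ) (v : 𝒳 × List Bool × 𝒴) : ℝ :=
  (Real.logb 2 (prob (muP νin π₁ π₂) (Tfun P (n+1)) v)
    - Real.logb 2 (prob (muP νin π₁ π₂) (Ufun P (n+1)) (v.2.1, v.2.2)))
  - (Real.logb 2 (prob (muP νin π₁ π₂) (Tfun P n) (v.1, v.2.1.take n, v.2.2))
    - Real.logb 2 (prob (muP νin π₁ π₂) (Ufun P n) (v.2.1.take n, v.2.2)))

/-- Indicator that party 1 speaks at step `n+1`. -/
noncomputable def tauv (n : ℕ) (v : 𝒳 × List Bool × 𝒴) : ℝ :=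
  if P.turn₂ (v.2.1.take n) v.2.2 = some true then 1 else 0

/-- Information-per-bit functional appearing in the key inequality. -/
noncomputable def Gp (w : 𝒳 × Bool → ℝ) (p : 𝒳 × Bool) : ℝ :=
  Real.logb 2 (w p) + Real.logb 2 (∑ r : 𝒳 × Bool, w r)
    - Real.logb 2 (w (p.1, true) + w (p.1, false))
    - Real.logb 2 (∑ x : 𝒳, w (x, p.2))

lemma key_ineq' (w : 𝒳 × Bool → ℝ) (hw : ∀ p, 0 ≤ w p) :
    ∑ p : 𝒳 × Bool, w p * (Gp w p - 1) ≤ 0 := by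
  have h := key_ineq w hw
  have e : ∑ p : 𝒳 × Bool, w p * (Gp w p - 1)
      = (∑ p : 𝒳 × Bool, w p * Gp w p) - ∑ p : 𝒳 × Bool, w p := by
    rw [← Finset.sum_sub_distrib]
    exact Finset.sum_congr rfl fun p _ => by ring
  rw [e]
  simp only [Gp] at *
  linarith

lemma muP_ne {ω : (𝒳 × 𝒴) × ρ₁ × ρ₂} (h : muP νin π₁ π₂ ω ≠ 0) :
    νin ω.1 ≠ 0 ∧ π₁ ω.2.1 ≠ 0 ∧ π₂ ω.2.2 ≠ 0 := by
  refine ⟨?_, ?_, ?_⟩ <;> intro h0 <;> apply h <;> simp [muP, h0]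

lemma muP_nonneg (hν : IsPMF νin) (hπ₁ : IsPMF π₁) (hπ₂ : IsPMF π₂)
    (ω : (𝒳 × 𝒴) × ρ₁ × ρ₂) : 0 ≤ muP νin π₁ π₂ ω :=
  mul_nonneg (mul_nonneg (hν.1 _) (hπ₁.1 _)) (hπ₂.1 _)

lemma pB_succ {n : ℕ} {y : 𝒴} {m : List Bool} (hlen : m.length = n)
    (ht : P.turn₂ m y = some true) (b : Bool) :
    pB π₂ P (n+1) y (m ++ [b]) = pB π₂ P n y m := by
  rw [pB, pB]
  exact pe_congr fun r₂ => condB_concat_true P hlen ht b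

lemma pA_split {y : 𝒴} {m : List Bool} (ht : P.turn₂ m y = some true) (x : 𝒳) :
    pA π₁ P x y (m ++ [true]) + pA π₁ P x y (m ++ [false]) = pA π₁ P x y m := by
  have h1 : pA π₁ P x y (m ++ [true])
      = pe π₁ (fun r => condA P y x m r ∧ P.next₁ m x r = true) := by
    rw [pA]
    exact pe_congr fun r => by
      rw [condA_concat_true P ht]
      exact and_congr_right fun _ => eq_comm
  have h2 : pA π₁ P x y (m ++ [false])
      = pe π₁ (fun r => condA P y x m r ∧ P.next₁ m x r = false) := by
    rw [pA]
    exact pe_congr fun r => by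
      rw [condA_concat_true P ht]
      exact and_congr_right fun _ => eq_comm
  rw [h1, h2, pA, pe_split]

lemma prob_triple'
    (hc : ∀ x y, νin (x, y) ≠ 0 → ∀ m, P.turn₁ m x = P.turn₂ m y)
    (n : ℕ) (x : 𝒳) (y : 𝒴) (m : List Bool) :
    prob (muP νin π₁ π₂) (Tfun P n) (x, m, y)
      = νin (x, y) * pA π₁ P x y m * pB π₂ P n y m :=
  prob_triple νin π₁ π₂ P hc n x y m

lemma prob_pair'
    (hc : ∀ x y, νin (x, y) ≠ 0 → ∀ m, P.turn₁ m x = P.turn₂ m y)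
    (n : ℕ) (y : 𝒴) (m : List Bool) :
    prob (muP νin π₁ π₂) (Ufun P n) (m, y)
      = (∑ x : 𝒳, νin (x, y) * pA π₁ P x y m) * pB π₂ P n y m :=
  prob_pair νin π₁ π₂ P hc n y m

lemma D_zero (hν : IsPMF νin) (hπ₁ : IsPMF π₁) (hπ₂ : IsPMF π₂)
    (hc : ∀ x y, νin (x, y) ≠ 0 → ∀ m, P.turn₁ m x = P.turn₂ m y)
    (n : ℕ) {x : 𝒳} {y : 𝒴} {r₁ : ρ₁} {r₂ : ρ₂} {m : List Bool}
    (hm : P.run x y r₁ r₂ n = m)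
    (hν0 : νin (x, y) ≠ 0) (hπ10 : π₁ r₁ ≠ 0) (hπ20 : π₂ r₂ ≠ 0)
    (ht : P.turn₂ m y ≠ some true) :
    Dv νin π₁ π₂ P n (x, P.run x y r₁ r₂ (n+1), y) = 0 := by
  classical
  have hcxy := hc x y hν0
  set m' := P.run x y r₁ r₂ (n+1) with hm'def
  have htake : m'.take n = m := by rw [hm'def, run_take, hm]
  obtain ⟨hAm, hBm⟩ := (run_eq_iff P hcxy n m).mp hm
  obtain ⟨hAm', hBm'⟩ := (run_eq_iff P hcxy (n+1) m').mp rfl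
  have hpAeq : ∀ x' : 𝒳, pA π₁ P x' y m' = pA π₁ P x' y m := by
    intro x'
    rcases ht2 : P.turn₂ m y with _ | b
    · have h1 : P.turn₁ (P.run x y r₁ r₂ n) x = none := by rw [hm, hcxy m]; exact ht2
      rw [hm'def, run_succ_none P h1, hm]
    · cases b
      · have h1 : P.turn₁ (P.run x y r₁ r₂ n) x = some false := by
          rw [hm, hcxy m]; exact ht2
        have hrun : m' = m ++ [P.next₂ m y r₂] := by
          rw [hm'def, run_succ_false P h1, hm]
        rw [hrun, pA, pA]
        exact pe_congr fun r => condA_concat_of_ne P (by rw [ht2]; simp) _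
      · exact absurd ht2 ht
  -- positivity
  have hνpos : 0 < νin (x, y) := lt_of_le_of_ne (hν.1 _) (Ne.symm hν0)
  have hpA : 0 < pA π₁ P x y m := pe_pos hπ₁.1 hAm hπ10
  have hpB : 0 < pB π₂ P n y m := pe_pos hπ₂.1 hBm hπ20
  have hpB' : 0 < pB π₂ P (n+1) y m' := pe_pos hπ₂.1 hBm' hπ20
  have hσ : 0 < ∑ x' : 𝒳, νin (x', y) * pA π₁ P x' y m := by
    refine lt_of_lt_of_le (mul_pos hνpos hpA) ?_
    exact Finset.single_le_sum
      (f := fun x' => νin (x', y) * pA π₁ P x' y m)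
      (fun i _ => mul_nonneg (hν.1 _) (pe_nonneg hπ₁.1 _)) (Finset.mem_univ x)
  have hσeq : (∑ x' : 𝒳, νin (x', y) * pA π₁ P x' y m')
      = ∑ x' : 𝒳, νin (x', y) * pA π₁ P x' y m :=
    Finset.sum_congr rfl fun x' _ => by rw [hpAeq x']
  rw [Dv]
  dsimp only
  rw [htake]
  rw [prob_triple' νin π₁ π₂ P hc (n+1) x y m', prob_pair' νin π₁ π₂ P hc (n+1) y m',
    prob_triple' νin π₁ π₂ P hc n x y m, prob_pair' νin π₁ π₂ P hc n y m]
  rw [hpAeq x, hσeq]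
  rw [Real.logb_mul (mul_ne_zero hν0 (ne_of_gt hpA)) (ne_of_gt hpB'),
    Real.logb_mul hν0 (ne_of_gt hpA),
    Real.logb_mul (ne_of_gt hσ) (ne_of_gt hpB'),
    Real.logb_mul (mul_ne_zero hν0 (ne_of_gt hpA)) (ne_of_gt hpB),
    Real.logb_mul hν0 (ne_of_gt hpA),
    Real.logb_mul (ne_of_gt hσ) (ne_of_gt hpB)]
  ring

end Step

section Block
variable {𝒳 𝒴 ρ₁ ρ₂ : Type}
    [Fintype 𝒳] [Fintype 𝒴] [Fintype ρ₁] [Fintype ρ₂]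
    (νin : 𝒳 × 𝒴 → ℝ) (π₁ : ρ₁ → ℝ) (π₂ : ρ₂ → ℝ) (P : Protocol 𝒳 𝒴 ρ₁ ρ₂ Unit)

open Classical in
lemma block_pos (hν : IsPMF νin) (hπ₁ : IsPMF π₁) (hπ₂ : IsPMF π₂)
    (hc : ∀ x y, νin (x, y) ≠ 0 → ∀ m, P.turn₁ m x = P.turn₂ m y)
    (n : ℕ) (m : List Bool) (y : 𝒴) (ht : P.turn₂ m y = some true)
    (x₀ : 𝒳) (s₀ : ρ₁) (t₀ : ρ₂) (hm₀ : P.run x₀ y s₀ t₀ n = m)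
    (hν₀ : νin (x₀, y) ≠ 0) (hπ₁₀ : π₁ s₀ ≠ 0) (hπ₂₀ : π₂ t₀ ≠ 0) :
    ∑ v ∈ (Finset.univ.image (Tfun P (n+1))).filter
        (fun v : 𝒳 × List Bool × 𝒴 => (v.2.1.take n, v.2.2) = (m, y)),
      prob (muP νin π₁ π₂) (Tfun P (n+1)) v * (Dv νin π₁ π₂ P n v - tauv P n v) ≤ 0 := by
  have hlen : m.length = n := by
    rw [← hm₀]
    exact run_length_eq P (by rw [hm₀, hc x₀ y hν₀ m, ht]; simp)
  have htake : ∀ b : Bool, (m ++ [b]).take n = m := fun b => by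
    rw [← hlen]; exact List.take_left
  have hgetD : ∀ b : Bool, (m ++ [b]).getD n false = b := fun b => by
    rw [← hlen]; simp
  set w : 𝒳 × Bool → ℝ :=
    fun p => νin (p.1, y) * pA π₁ P p.1 y (m ++ [p.2]) * pB π₂ P n y m with hwdef
  have hwnn : ∀ p, 0 ≤ w p := fun p =>
    mul_nonneg (mul_nonneg (hν.1 _) (pe_nonneg hπ₁.1 _)) (pe_nonneg hπ₂.1 _)
  have hqv : ∀ (x : 𝒳) (b : Bool),
      prob (muP νin π₁ π₂) (Tfun P (n+1)) (x, m ++ [b], y) = w (x, b) := by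
    intro x b
    rw [prob_triple' νin π₁ π₂ P hc (n+1) x y (m ++ [b]), pB_succ π₂ P hlen ht b]
  have hshape : ∀ v : 𝒳 × List Bool × 𝒴, v.2.1.take n = m → v.2.2 = y →
      prob (muP νin π₁ π₂) (Tfun P (n+1)) v ≠ 0 →
      ∃ x b, v = (x, m ++ [b], y) := by
    intro v hvk hvy hq
    obtain ⟨⟨⟨x, y'⟩, r₁, r₂⟩, hK, hμ'⟩ := pe_exists hq
    obtain ⟨hν0, hπ10, hπ20⟩ := muP_ne νin π₁ π₂ hμ'
    have hy' : y' = y := by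
      have h2 : (Tfun P (n+1) ((x, y'), r₁, r₂)).2.2 = y := by rw [hK]; exact hvy
      simpa [Tfun] using h2
    subst hy'
    have hrn : P.run x y' r₁ r₂ n = m := by
      have h2 : (Tfun P (n+1) ((x, y'), r₁, r₂)).2.1.take n = m := by rw [hK]; exact hvk
      simpa [Tfun, run_take] using h2
    have hturn : P.turn₁ (P.run x y' r₁ r₂ n) x = some true := by
      rw [hrn, hc x y' hν0 m]; exact ht
    refine ⟨x, P.next₁ m x r₁, ?_⟩
    rw [← hK]
    simp [Tfun, run_succ_true P hturn, hrn]
  have hDval : ∀ (x : 𝒳) (b : Bool), w (x, b) ≠ 0 →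
      Dv νin π₁ π₂ P n (x, m ++ [b], y) = Gp w (x, b) := by
    intro x b hwb
    rw [Dv]
    dsimp only
    rw [htake b]
    rw [prob_triple' νin π₁ π₂ P hc (n+1) x y (m ++ [b]),
      prob_pair' νin π₁ π₂ P hc (n+1) y (m ++ [b]),
      prob_triple' νin π₁ π₂ P hc n x y m,
      prob_pair' νin π₁ π₂ P hc n y m,
      pB_succ π₂ P hlen ht b]
    have e0 : νin (x, y) * pA π₁ P x y (m ++ [b]) * pB π₂ P n y m = w (x, b) := by
      simp [hwdef]
    have e1 : (∑ x' : 𝒳, νin (x', y) * pA π₁ P x' y (m ++ [b])) * pB π₂ P n y m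
        = ∑ x' : 𝒳, w (x', b) := by
      rw [Finset.sum_mul]
    have e2 : νin (x, y) * pA π₁ P x y m * pB π₂ P n y m = w (x, true) + w (x, false) := by
      rw [← pA_split π₁ P ht x]
      simp [hwdef]
      ring
    have e3 : (∑ x' : 𝒳, νin (x', y) * pA π₁ P x' y m) * pB π₂ P n y m
        = ∑ r : 𝒳 × Bool, w r := by
      rw [Finset.sum_mul, Fintype.sum_prod_type]
      refine Finset.sum_congr rfl fun x' _ => ?_
      rw [Fintype.sum_bool, ← pA_split π₁ P ht x']
      simp [hwdef]
      ring
    rw [e0, e1, e2, e3, Gp]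
    ring
  have htauval : ∀ v : 𝒳 × List Bool × 𝒴, v.2.1.take n = m → v.2.2 = y →
      tauv P n v = 1 := by
    intro v h1 h2
    rw [tauv, h1, h2, if_pos ht]
  have hsupp : ∀ (x : 𝒳) (b : Bool), w (x, b) ≠ 0 →
      (x, m ++ [b], y) ∈ (Finset.univ.image (Tfun P (n+1))).filter
        (fun v : 𝒳 × List Bool × 𝒴 => (v.2.1.take n, v.2.2) = (m, y)) := by
    intro x b hwb
    have hν0 : νin (x, y) ≠ 0 := fun h => hwb (by simp [hwdef, h])
    have hpA0 : pA π₁ P x y (m ++ [b]) ≠ 0 := fun h => hwb (by simp [hwdef, h])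
    have hpB0 : pB π₂ P n y m ≠ 0 := fun h => hwb (by simp [hwdef, h])
    obtain ⟨r₁, hA, hπ1r⟩ := pe_exists hpA0
    obtain ⟨r₂, hB, hπ2r⟩ := pe_exists hpB0
    have hcxy := hc x y hν0
    have hrun : P.run x y r₁ r₂ (n+1) = m ++ [b] :=
      (run_eq_iff P hcxy (n+1) (m ++ [b])).mpr
        ⟨hA, (condB_concat_true P hlen ht b).mpr hB⟩
    refine Finset.mem_filter.mpr ⟨Finset.mem_image.mpr ⟨((x, y), r₁, r₂),
      Finset.mem_univ _, ?_⟩, ?_⟩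
    · simp [Tfun, hrun]
    · simp [htake b]
  -- restrict, transport, apply the key inequality
  rw [← Finset.sum_filter_of_ne
    (p := fun v => prob (muP νin π₁ π₂) (Tfun P (n+1)) v ≠ 0)
    (fun v _ h => by
      intro h0
      exact h (by simp [h0]))]
  refine le_trans (le_of_eq ?_) (key_ineq' w hwnn)
  rw [← Finset.sum_filter_of_ne (s := Finset.univ)
    (f := fun p => w p * (Gp w p - 1))
    (p := fun p => w p ≠ 0)
    (fun p _ h => by
      intro h0
      exact h (by simp [h0]))]
  refine Finset.sum_nbij' (i := fun v : 𝒳 × List Bool × 𝒴 => (v.1, v.2.1.getD n false))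
    (j := fun p : 𝒳 × Bool => (p.1, m ++ [p.2], y)) ?_ ?_ ?_ ?_ ?_
  · -- hi
    intro v hv
    obtain ⟨hvB, hq⟩ := Finset.mem_filter.mp hv
    obtain ⟨-, hmy⟩ := Finset.mem_filter.mp hvB
    have h1 : v.2.1.take n = m := by
      have := congrArg Prod.fst hmy; simpa using this
    have h2 : v.2.2 = y := by
      have := congrArg Prod.snd hmy; simpa using this
    obtain ⟨x, b, rfl⟩ := hshape v h1 h2 hq
    refine Finset.mem_filter.mpr ⟨Finset.mem_univ _, ?_⟩
    simp only [hgetD b]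
    rw [← hqv x b]
    exact hq
  · -- hj
    intro p hp
    obtain ⟨-, hwp⟩ := Finset.mem_filter.mp hp
    refine Finset.mem_filter.mpr ⟨hsupp p.1 p.2 hwp, ?_⟩
    rw [hqv p.1 p.2]
    exact hwp
  · -- left inverse
    intro v hv
    obtain ⟨hvB, hq⟩ := Finset.mem_filter.mp hv
    obtain ⟨-, hmy⟩ := Finset.mem_filter.mp hvB
    have h1 : v.2.1.take n = m := by
      have := congrArg Prod.fst hmy; simpa using this
    have h2 : v.2.2 = y := by
      have := congrArg Prod.snd hmy; simpa using this
    obtain ⟨x, b, rfl⟩ := hshape v h1 h2 hq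
    dsimp only
    rw [hgetD b]
  · -- right inverse
    rintro ⟨x, b⟩ _
    dsimp only
    rw [hgetD b]
  · -- values
    intro v hv
    obtain ⟨hvB, hq⟩ := Finset.mem_filter.mp hv
    obtain ⟨-, hmy⟩ := Finset.mem_filter.mp hvB
    have h1 : v.2.1.take n = m := by
      have := congrArg Prod.fst hmy; simpa using this
    have h2 : v.2.2 = y := by
      have := congrArg Prod.snd hmy; simpa using this
    obtain ⟨x, b, rfl⟩ := hshape v h1 h2 hq
    have hwb : w (x, b) ≠ 0 := by rw [← hqv x b]; exact hq
    rw [hqv x b, hDval x b hwb, htauval _ h1 h2]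
    simp only [hgetD b]

end Block

section StepBound
variable {𝒳 𝒴 ρ₁ ρ₂ : Type}
    [Fintype 𝒳] [Fintype 𝒴] [Fintype ρ₁] [Fintype ρ₂]
    (νin : 𝒳 × 𝒴 → ℝ) (π₁ : ρ₁ → ℝ) (π₂ : ρ₂ → ℝ) (P : Protocol 𝒳 𝒴 ρ₁ ρ₂ Unit)

lemma sum_fiber' {Ω γ : Type*} [Fintype Ω] [DecidableEq γ] (μ : Ω → ℝ) (Z : Ω → γ)
    (φ : γ → ℝ) :
    ∑ a ∈ Finset.univ.image Z, prob μ Z a * φ a = ∑ ω, μ ω * φ (Z ω) := by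
  classical
  unfold prob pe
  rw [Finset.sum_congr rfl (fun a _ => Finset.sum_mul _ _ _)]
  rw [Finset.sum_comm]
  refine Finset.sum_congr rfl fun ω _ => ?_
  dsimp only
  trans (∑ a ∈ Finset.image Z Finset.univ, if Z ω = a then μ ω * φ (Z ω) else 0)
  · refine Finset.sum_congr rfl fun a _ => ?_
    by_cases hz : Z ω = a
    · rw [if_pos hz, if_pos hz, hz]
    · rw [if_neg hz, if_neg hz, zero_mul]
  · rw [Finset.sum_ite_eq]
    simp

open Classical in
lemma step_bound (hν : IsPMF νin) (hπ₁ : IsPMF π₁) (hπ₂ : IsPMF π₂)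
    (hc : ∀ x y, νin (x, y) ≠ 0 → ∀ m, P.turn₁ m x = P.turn₂ m y) (n : ℕ) :
    (∑ ω : (𝒳 × 𝒴) × ρ₁ × ρ₂, muP νin π₁ π₂ ω *
      (Real.logb 2 (prob (muP νin π₁ π₂) (Tfun P (n+1)) (Tfun P (n+1) ω))
       - Real.logb 2 (prob (muP νin π₁ π₂) (Ufun P (n+1)) (Ufun P (n+1) ω))))
    - (∑ ω : (𝒳 × 𝒴) × ρ₁ × ρ₂, muP νin π₁ π₂ ω *
      (Real.logb 2 (prob (muP νin π₁ π₂) (Tfun P n) (Tfun P n ω))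
       - Real.logb 2 (prob (muP νin π₁ π₂) (Ufun P n) (Ufun P n ω))))
    ≤ ∑ ω : (𝒳 × 𝒴) × ρ₁ × ρ₂, muP νin π₁ π₂ ω *
        (if P.turn₁ (P.run ω.1.1 ω.1.2 ω.2.1 ω.2.2 n) ω.1.1 = some true
          then (1:ℝ) else 0) := by
  classical
  have hLHS : (∑ ω : (𝒳 × 𝒴) × ρ₁ × ρ₂, muP νin π₁ π₂ ω *
      (Real.logb 2 (prob (muP νin π₁ π₂) (Tfun P (n+1)) (Tfun P (n+1) ω))
       - Real.logb 2 (prob (muP νin π₁ π₂) (Ufun P (n+1)) (Ufun P (n+1) ω))))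
    - (∑ ω : (𝒳 × 𝒴) × ρ₁ × ρ₂, muP νin π₁ π₂ ω *
      (Real.logb 2 (prob (muP νin π₁ π₂) (Tfun P n) (Tfun P n ω))
       - Real.logb 2 (prob (muP νin π₁ π₂) (Ufun P n) (Ufun P n ω))))
    = ∑ ω : (𝒳 × 𝒴) × ρ₁ × ρ₂, muP νin π₁ π₂ ω * Dv νin π₁ π₂ P n (Tfun P (n+1) ω) := by
    rw [← Finset.sum_sub_distrib]
    refine Finset.sum_congr rfl fun ω _ => ?_
    rw [Dv]
    have e1 : (Tfun P (n+1) ω).2.1.take n = P.run ω.1.1 ω.1.2 ω.2.1 ω.2.2 n := by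
      rw [show (Tfun P (n+1) ω).2.1 = P.run ω.1.1 ω.1.2 ω.2.1 ω.2.2 (n+1) from rfl,
        run_take]
    rw [e1]
    have e2 : ((Tfun P (n+1) ω).2.1, (Tfun P (n+1) ω).2.2) = Ufun P (n+1) ω := rfl
    have e3 : ((Tfun P (n+1) ω).1, P.run ω.1.1 ω.1.2 ω.2.1 ω.2.2 n, (Tfun P (n+1) ω).2.2)
        = Tfun P n ω := rfl
    have e4 : (P.run ω.1.1 ω.1.2 ω.2.1 ω.2.2 n, (Tfun P (n+1) ω).2.2) = Ufun P n ω := rfl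
    rw [e2, e3, e4]
    ring
  have hRHS : (∑ ω : (𝒳 × 𝒴) × ρ₁ × ρ₂, muP νin π₁ π₂ ω *
        (if P.turn₁ (P.run ω.1.1 ω.1.2 ω.2.1 ω.2.2 n) ω.1.1 = some true
          then (1:ℝ) else 0))
      = ∑ ω : (𝒳 × 𝒴) × ρ₁ × ρ₂, muP νin π₁ π₂ ω * tauv P n (Tfun P (n+1) ω) := by
    refine Finset.sum_congr rfl fun ω _ => ?_
    by_cases h0 : muP νin π₁ π₂ ω = 0
    · rw [h0, zero_mul, zero_mul]
    · obtain ⟨hν0, -, -⟩ := muP_ne νin π₁ π₂ h0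
      congr 1
      rw [tauv]
      have e1 : (Tfun P (n+1) ω).2.1.take n = P.run ω.1.1 ω.1.2 ω.2.1 ω.2.2 n := by
        rw [show (Tfun P (n+1) ω).2.1 = P.run ω.1.1 ω.1.2 ω.2.1 ω.2.2 (n+1) from rfl,
          run_take]
      have e2 : (Tfun P (n+1) ω).2.2 = ω.1.2 := rfl
      rw [e1, e2, ← hc ω.1.1 ω.1.2 hν0 (P.run ω.1.1 ω.1.2 ω.2.1 ω.2.2 n)]
  rw [hLHS, hRHS]
  have hmain : ∑ ω : (𝒳 × 𝒴) × ρ₁ × ρ₂, muP νin π₁ π₂ ω *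
      (Dv νin π₁ π₂ P n (Tfun P (n+1) ω) - tauv P n (Tfun P (n+1) ω)) ≤ 0 := by
    rw [← sum_fiber' (muP νin π₁ π₂) (Tfun P (n+1))
      (fun v => Dv νin π₁ π₂ P n v - tauv P n v)]
    rw [← Finset.sum_fiberwise_of_maps_to
      (g := fun v : 𝒳 × List Bool × 𝒴 => (v.2.1.take n, v.2.2))
      (t := (Finset.univ.image (Tfun P (n+1))).image
        (fun v : 𝒳 × List Bool × 𝒴 => (v.2.1.take n, v.2.2)))
      (fun v hv => Finset.mem_image_of_mem _ hv)
      (fun v => prob (muP νin π₁ π₂) (Tfun P (n+1)) v *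
        (Dv νin π₁ π₂ P n v - tauv P n v))]
    refine Finset.sum_nonpos fun my _ => ?_
    obtain ⟨m, y⟩ := my
    by_cases ht : P.turn₂ m y = some true
    · by_cases hall : ∀ v ∈ (Finset.univ.image (Tfun P (n+1))).filter
          (fun v : 𝒳 × List Bool × 𝒴 => (v.2.1.take n, v.2.2) = (m, y)),
          prob (muP νin π₁ π₂) (Tfun P (n+1)) v = 0
      · exact le_of_eq (Finset.sum_eq_zero fun v hv => by rw [hall v hv, zero_mul])
      · push_neg at hall
        obtain ⟨v₀, hv₀, hq₀⟩ := hall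
        obtain ⟨⟨⟨x₀, y₀⟩, s₀, t₀⟩, hK, hμ'⟩ := pe_exists hq₀
        obtain ⟨hν0, h1, h2⟩ := muP_ne νin π₁ π₂ hμ'
        have hmy := (Finset.mem_filter.mp hv₀).2
        have hy0 : y₀ = y := by
          have h3 : (Tfun P (n+1) ((x₀, y₀), s₀, t₀)).2.2 = y := by
            rw [hK]
            have := congrArg Prod.snd hmy; simpa using this
          simpa [Tfun] using h3
        subst hy0
        have hm0 : P.run x₀ y₀ s₀ t₀ n = m := by
          have h3 : (Tfun P (n+1) ((x₀, y₀), s₀, t₀)).2.1.take n = m := by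
            rw [hK]
            have := congrArg Prod.fst hmy; simpa using this
          simpa [Tfun, run_take] using h3
        exact block_pos νin π₁ π₂ P hν hπ₁ hπ₂ hc n m y₀ ht x₀ s₀ t₀ hm0 hν0 h1 h2
    · refine le_of_eq (Finset.sum_eq_zero fun v hv => ?_)
      have hmy := (Finset.mem_filter.mp hv).2
      have h1 : v.2.1.take n = m := by
        have := congrArg Prod.fst hmy; simpa using this
      have h2 : v.2.2 = y := by
        have := congrArg Prod.snd hmy; simpa using this
      by_cases hq : prob (muP νin π₁ π₂) (Tfun P (n+1)) v = 0
      · rw [hq, zero_mul]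
      · obtain ⟨⟨⟨x, y'⟩, r₁, r₂⟩, hK, hμ'⟩ := pe_exists hq
        obtain ⟨hν0, hπ10, hπ20⟩ := muP_ne νin π₁ π₂ hμ'
        have hy' : y' = y := by
          have h3 : (Tfun P (n+1) ((x, y'), r₁, r₂)).2.2 = y := by rw [hK]; exact h2
          simpa [Tfun] using h3
        subst hy'
        have hm : P.run x y' r₁ r₂ n = m := by
          have h3 : (Tfun P (n+1) ((x, y'), r₁, r₂)).2.1.take n = m := by
            rw [hK]; exact h1
          simpa [Tfun, run_take] using h3
        have hveq : v = (x, P.run x y' r₁ r₂ (n+1), y') := by rw [← hK]; rfl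
        have hτ : tauv P n (x, P.run x y' r₁ r₂ (n+1), y') = 0 := by
          rw [tauv]
          dsimp only
          rw [run_take, hm]
          exact if_neg ht
        rw [hveq, hτ, D_zero νin π₁ π₂ P hν hπ₁ hπ₂ hc n hm hν0 hπ10 hπ20 ht]
        ring
  have e : ∑ ω : (𝒳 × 𝒴) × ρ₁ × ρ₂, muP νin π₁ π₂ ω *
      (Dv νin π₁ π₂ P n (Tfun P (n+1) ω) - tauv P n (Tfun P (n+1) ω))
      = (∑ ω : (𝒳 × 𝒴) × ρ₁ × ρ₂, muP νin π₁ π₂ ω * Dv νin π₁ π₂ P n (Tfun P (n+1) ω))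
        - ∑ ω : (𝒳 × 𝒴) × ρ₁ × ρ₂, muP νin π₁ π₂ ω * tauv P n (Tfun P (n+1) ω) := by
    rw [← Finset.sum_sub_distrib]
    exact Finset.sum_congr rfl fun ω _ => by ring
  rw [e] at hmain
  linarith

end StepBound
end Paper

namespace Paper

/-- for any 2-party protocol with inputs `(X,Y)` (with private
randomness independent of the inputs and of each other) and transcript `M`
(run for at most `d` steps), `I(X;M|Y) ≤ E[#bits sent by party 1]`. -/
theorem infoCost₁_le_expected_bits₁ {𝒳 𝒴 ρ₁ ρ₂ : Type}
    [Fintype 𝒳] [Fintype 𝒴] [Fintype ρ₁] [Fintype ρ₂]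
    (νin : 𝒳 × 𝒴 → ℝ) (π₁ : ρ₁ → ℝ) (π₂ : ρ₂ → ℝ)
    (hν : IsPMF νin) (hπ₁ : IsPMF π₁) (hπ₂ : IsPMF π₂)
    (P : Protocol 𝒳 𝒴 ρ₁ ρ₂ Unit) (d : ℕ)
    (μ : (𝒳 × 𝒴) × ρ₁ × ρ₂ → ℝ)
    (hμ : μ = fun ω => νin ω.1 * π₁ ω.2.1 * π₂ ω.2.2)
    (X : (𝒳 × 𝒴) × ρ₁ × ρ₂ → 𝒳) (hX : X = fun ω => ω.1.1)
    (Y : (𝒳 × 𝒴) × ρ₁ × ρ₂ → 𝒴) (hY : Y = fun ω => ω.1.2)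
    (M : (𝒳 × 𝒴) × ρ₁ × ρ₂ → List Bool)
    (hM : M = fun ω => P.run ω.1.1 ω.1.2 ω.2.1 ω.2.2 d)
    (hcons : ∀ ω, μ ω ≠ 0 → ∀ m : List Bool, P.turn₁ m (X ω) = P.turn₂ m (Y ω)) :
    condMutInfo μ X M Y
      ≤ ∑ ω, μ ω * (P.count₁ ω.1.1 ω.1.2 ω.2.1 ω.2.2 d : ℝ) := by
  subst hμ hX hY hM
  have hc : ∀ x y, νin (x, y) ≠ 0 → ∀ m, P.turn₁ m x = P.turn₂ m y := by
    intro x y h0 m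
    obtain ⟨r₁, -, h1⟩ := Finset.exists_ne_zero_of_sum_ne_zero
      (by rw [hπ₁.2]; exact one_ne_zero)
    obtain ⟨r₂, -, h2⟩ := Finset.exists_ne_zero_of_sum_ne_zero
      (by rw [hπ₂.2]; exact one_ne_zero)
    exact hcons ((x, y), r₁, r₂)
      (mul_ne_zero (mul_ne_zero h0 h1) h2) m
  show condMutInfo (muP νin π₁ π₂) (fun ω => ω.1.1)
      (fun ω => P.run ω.1.1 ω.1.2 ω.2.1 ω.2.2 d) (fun ω => ω.1.2)
    ≤ ∑ ω, muP νin π₁ π₂ ω * (P.count₁ ω.1.1 ω.1.2 ω.2.1 ω.2.2 d : ℝ)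
  simp only [condMutInfo]
  have eTd : (∑ ω : (𝒳 × 𝒴) × ρ₁ × ρ₂, muP νin π₁ π₂ ω *
        Real.logb 2 (prob (muP νin π₁ π₂)
          (fun ω : (𝒳 × 𝒴) × ρ₁ × ρ₂ => (ω.1.1, P.run ω.1.1 ω.1.2 ω.2.1 ω.2.2 d, ω.1.2))
          (ω.1.1, P.run ω.1.1 ω.1.2 ω.2.1 ω.2.2 d, ω.1.2)))
      = ∑ ω : (𝒳 × 𝒴) × ρ₁ × ρ₂, muP νin π₁ π₂ ω *
          Real.logb 2 (prob (muP νin π₁ π₂) (Tfun P d) (Tfun P d ω)) := rfl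
  have eUd : (∑ ω : (𝒳 × 𝒴) × ρ₁ × ρ₂, muP νin π₁ π₂ ω *
        Real.logb 2 (prob (muP νin π₁ π₂)
          (fun ω : (𝒳 × 𝒴) × ρ₁ × ρ₂ => (P.run ω.1.1 ω.1.2 ω.2.1 ω.2.2 d, ω.1.2))
          (P.run ω.1.1 ω.1.2 ω.2.1 ω.2.2 d, ω.1.2)))
      = ∑ ω : (𝒳 × 𝒴) × ρ₁ × ρ₂, muP νin π₁ π₂ ω *
          Real.logb 2 (prob (muP νin π₁ π₂) (Ufun P d) (Ufun P d ω)) := rfl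
  have hT0 : (∑ ω : (𝒳 × 𝒴) × ρ₁ × ρ₂, muP νin π₁ π₂ ω *
        Real.logb 2 (prob (muP νin π₁ π₂)
          (fun ω : (𝒳 × 𝒴) × ρ₁ × ρ₂ => (ω.1.1, ω.1.2)) (ω.1.1, ω.1.2)))
      = ∑ ω : (𝒳 × 𝒴) × ρ₁ × ρ₂, muP νin π₁ π₂ ω *
          Real.logb 2 (prob (muP νin π₁ π₂) (Tfun P 0) (Tfun P 0 ω)) := by
    refine Finset.sum_congr rfl fun ω _ => ?_
    congr 1
    congr 1
    exact (pe_congr fun ω' => by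
      simp [Tfun, Protocol.run, Prod.ext_iff]).symm
  have hU0 : (∑ ω : (𝒳 × 𝒴) × ρ₁ × ρ₂, muP νin π₁ π₂ ω *
        Real.logb 2 (prob (muP νin π₁ π₂)
          (fun ω : (𝒳 × 𝒴) × ρ₁ × ρ₂ => ω.1.2) ω.1.2))
      = ∑ ω : (𝒳 × 𝒴) × ρ₁ × ρ₂, muP νin π₁ π₂ ω *
          Real.logb 2 (prob (muP νin π₁ π₂) (Ufun P 0) (Ufun P 0 ω)) := by
    refine Finset.sum_congr rfl fun ω _ => ?_
    congr 1
    congr 1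
    exact (pe_congr fun ω' => by
      simp [Ufun, Protocol.run, Prod.ext_iff]).symm
  rw [H_eq, H_eq, H_eq, H_eq]
  rw [eTd, eUd, hT0, hU0]
  set F : ℕ → ℝ := fun n => ∑ ω : (𝒳 × 𝒴) × ρ₁ × ρ₂, muP νin π₁ π₂ ω *
      (Real.logb 2 (prob (muP νin π₁ π₂) (Tfun P n) (Tfun P n ω))
        - Real.logb 2 (prob (muP νin π₁ π₂) (Ufun P n) (Ufun P n ω))) with hFdef
  have hsplit : ∀ n : ℕ, F n
      = (∑ ω : (𝒳 × 𝒴) × ρ₁ × ρ₂, muP νin π₁ π₂ ω *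
          Real.logb 2 (prob (muP νin π₁ π₂) (Tfun P n) (Tfun P n ω)))
        - ∑ ω : (𝒳 × 𝒴) × ρ₁ × ρ₂, muP νin π₁ π₂ ω *
          Real.logb 2 (prob (muP νin π₁ π₂) (Ufun P n) (Ufun P n ω)) := by
    intro n
    rw [hFdef, ← Finset.sum_sub_distrib]
    exact Finset.sum_congr rfl fun ω _ => by ring
  have hgoal : (-(∑ ω : (𝒳 × 𝒴) × ρ₁ × ρ₂, muP νin π₁ π₂ ω *
          Real.logb 2 (prob (muP νin π₁ π₂) (Tfun P 0) (Tfun P 0 ω)))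
      + -(∑ ω : (𝒳 × 𝒴) × ρ₁ × ρ₂, muP νin π₁ π₂ ω *
          Real.logb 2 (prob (muP νin π₁ π₂) (Ufun P d) (Ufun P d ω)))
      - -(∑ ω : (𝒳 × 𝒴) × ρ₁ × ρ₂, muP νin π₁ π₂ ω *
          Real.logb 2 (prob (muP νin π₁ π₂) (Tfun P d) (Tfun P d ω)))
      - -(∑ ω : (𝒳 × 𝒴) × ρ₁ × ρ₂, muP νin π₁ π₂ ω *
          Real.logb 2 (prob (muP νin π₁ π₂) (Ufun P 0) (Ufun P 0 ω))))
      = F d - F 0 := by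
    rw [hsplit d, hsplit 0]
    ring
  rw [hgoal, ← Finset.sum_range_sub F d]
  calc ∑ n ∈ Finset.range d, (F (n+1) - F n)
      ≤ ∑ n ∈ Finset.range d, ∑ ω : (𝒳 × 𝒴) × ρ₁ × ρ₂, muP νin π₁ π₂ ω *
          (if P.turn₁ (P.run ω.1.1 ω.1.2 ω.2.1 ω.2.2 n) ω.1.1 = some true
            then (1:ℝ) else 0) :=
        Finset.sum_le_sum fun n _ => step_bound νin π₁ π₂ P hν hπ₁ hπ₂ hc n
    _ = ∑ ω : (𝒳 × 𝒴) × ρ₁ × ρ₂, muP νin π₁ π₂ ω *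
          (P.count₁ ω.1.1 ω.1.2 ω.2.1 ω.2.2 d : ℝ) := by
        rw [Finset.sum_comm]
        refine Finset.sum_congr rfl fun ω _ => ?_
        rw [← Finset.mul_sum]
        congr 1
        rw [Protocol.count₁, Finset.card_filter]
        push_cast
        rfl


end Paper
end
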